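/- arXiv:1201.6185 — 5 statements merged into one kernel-verified Lean document; each statement's English description precedes it below -/
import Mathlib

section
/- Fix r, s ≥ 0, n = r + s, and n₁, n₂ ≥ 0 with n₁ + n₂ = n. For σ ∈ Sh_{r,s}, set r₁ = #{i ∈ {1,…,r} : σ(i) ≤ n₁} and s₁ = #{i ∈ {r+1,…,n} : σ(i) ≤ n₁}. Then: (a) r₁ + s₁ = n₁; (b) {i ≤ r : σ(i) ≤ n₁} = {1,…,r₁} and {i > r : σ(i) ≤ n₁} = {r+1,…,r+s₁}; (c) the map σ₁ of {1,…,n₁} defined by σ₁(i) = σ(i) for 1 ≤ i ≤ r₁ and σ₁(r₁+j) = σ(r+j) for 1 ≤ j ≤ s₁ is a well-defined (r₁,s₁)-shuffle, and the map σ₂ of {1,…,n₂} defined by σ₂(i) = σ(r₁+i) − n₁ for 1 ≤ i ≤ r−r₁ and σ₂((r−r₁)+j) = σ(r+s₁+j) − n₁ for 1 ≤ j ≤ s−s₁ is a well-defined (r−r₁, s−s₁)-shuffle; (d) the assignment σ ↦ (r₁, σ₁, σ₂) is a bijection from Sh_{r,s} onto the disjoint union, over all r₁, s₁ with 0 ≤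 r₁ ≤ r, 0 ≤ s₁ ≤ s and r₁ + s₁ = n₁, of the sets Sh_{r₁,s₁} × Sh_{r−r₁, s−s₁}. (This is the combinatorial bijection underlying the compatibility of the shuffle product with the deconcatenation coproduct, making the tensor algebra a rational bialgebra.) -/
/-- `σ` is an `(r, n-r)`-shuffle: strictly increasing on `{0,…,r-1}` and on
`{r,…,n-1}` (0-based indexing). -/
def IsShuffle (n r : ℕ) (σ : Equiv.Perm (Fin n)) : Prop :=
  ∀ i j : Fin n, i < j → ((j : ℕ) < r ∨ r ≤ (i : ℕ)) → σ i < σ j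

/-- The value of a permutation of `Fin m` at a natural number (junk value `0`
outside the range). -/
def ap {m : ℕ} (σ : Equiv.Perm (Fin m)) (i : ℕ) : ℕ :=
  if h : i < m then (σ ⟨i, h⟩ : ℕ) else 0

/-- `r₁(σ)`: the number of indices `i` in the first block `{0,…,r-1}` with
`σ(i) < n₁`. -/
def rOne (r s n₁ : ℕ) (σ : Equiv.Perm (Fin (r + s))) : ℕ :=
  (Finset.univ.filter fun i : Fin (r + s) => (i : ℕ) < r ∧ (σ i : ℕ) < n₁).card

/-- `s₁(σ)`: the number of indices `i` in the second block `{r,…,r+s-1}` with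
`σ(i) < n₁`. -/
def sOne (r s n₁ : ℕ) (σ : Equiv.Perm (Fin (r + s))) : ℕ :=
  (Finset.univ.filter fun i : Fin (r + s) => r ≤ (i : ℕ) ∧ (σ i : ℕ) < n₁).card

/-- The defining value equations for the pair `(σ₁, σ₂)` associated to `σ` and the
splitting `(a, b) = (r₁, s₁)`: `σ₁(i) = σ(i)` for `i < a`, `σ₁(a+j) = σ(r+j)` for
`j < b`, `σ₂(i) = σ(a+i) − n₁` for `i < r−a`, and `σ₂((r−a)+j) = σ(r+b+j) − n₁`
for `j < s−b` (0-based indexing). -/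
def Matches (r s n₁ n₂ : ℕ) (a b : ℕ) (σ : Equiv.Perm (Fin (r + s)))
    (σ₁ : Equiv.Perm (Fin n₁)) (σ₂ : Equiv.Perm (Fin n₂)) : Prop :=
  (∀ i < a, ap σ₁ i = ap σ i) ∧
  (∀ j < b, ap σ₁ (a + j) = ap σ (r + j)) ∧
  (∀ i < r - a, ap σ₂ i = ap σ (a + i) - n₁) ∧
  (∀ j < s - b, ap σ₂ ((r - a) + j) = ap σ (r + b + j) - n₁)

lemma ap_lt {m : ℕ} (σ : Equiv.Perm (Fin m)) {i : ℕ} (h : i < m) :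
    ap σ i = (σ ⟨i, h⟩ : ℕ) := dif_pos h

lemma ap_val_lt {m : ℕ} (σ : Equiv.Perm (Fin m)) {i : ℕ} (h : i < m) :
    ap σ i < m := by rw [ap_lt σ h]; exact (σ ⟨i, h⟩).isLt

lemma ap_inj {m : ℕ} (σ : Equiv.Perm (Fin m)) {i j : ℕ} (hi : i < m) (hj : j < m)
    (h : ap σ i = ap σ j) : i = j := by
  rw [ap_lt σ hi, ap_lt σ hj] at h
  have := σ.injective (Fin.ext h)
  simpa [Fin.ext_iff] using this

lemma ap_mono {n r : ℕ} {σ : Equiv.Perm (Fin n)} (hσ : IsShuffle n r σ) {i j : ℕ}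
    (hj : j < n) (hij : i < j) (hc : j < r ∨ r ≤ i) : ap σ i < ap σ j := by
  rw [ap_lt σ (lt_trans hij hj), ap_lt σ hj]
  exact hσ ⟨i, lt_trans hij hj⟩ ⟨j, hj⟩ (by simpa [Fin.lt_def] using hij) hc


lemma perm_ext_of_ap {m : ℕ} {σ τ : Equiv.Perm (Fin m)}
    (h : ∀ i < m, ap σ i = ap τ i) : σ = τ := by
  apply Equiv.ext
  intro x
  have := h x x.isLt
  rw [ap_lt σ x.isLt, ap_lt τ x.isLt] at this
  simpa [Fin.ext_iff] using this

lemma card_filter_lt {n c : ℕ} (hc : c ≤ n) :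
    (Finset.univ.filter fun i : Fin n => (i : ℕ) < c).card = c := by
  have himg : (Finset.univ.filter fun i : Fin n => (i : ℕ) < c)
      = Finset.univ.image (Fin.castLE hc) := by
    ext x
    simp only [Finset.mem_filter, Finset.mem_univ, true_and, Finset.mem_image, Fin.ext_iff]
    constructor
    · intro hx; exact ⟨⟨x, hx⟩, rfl⟩
    · rintro ⟨y, hy⟩; rw [← hy]; exact y.isLt
  rw [himg, Finset.card_image_of_injective _ (Fin.castLE_injective hc),
    Finset.card_univ, Fintype.card_fin]

lemma card_filter_Ico {n lo c : ℕ} (hc : lo + c ≤ n) :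
    (Finset.univ.filter fun i : Fin n => lo ≤ (i : ℕ) ∧ (i : ℕ) < lo + c).card = c := by
  have himg : (Finset.univ.filter fun i : Fin n => lo ≤ (i : ℕ) ∧ (i : ℕ) < lo + c)
      = Finset.univ.image (fun j : Fin c => (⟨lo + j, by omega⟩ : Fin n)) := by
    ext x
    simp only [Finset.mem_filter, Finset.mem_univ, true_and, Finset.mem_image, Fin.ext_iff]
    constructor
    · rintro ⟨h1, h2⟩; exact ⟨⟨x - lo, by omega⟩, by simp; omega⟩
    · rintro ⟨y, hy⟩; have := y.isLt; omega
  rw [himg, Finset.card_image_of_injective, Finset.card_univ, Fintype.card_fin]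
  intro a b hab
  simp only [Fin.ext_iff] at hab ⊢
  omega

lemma initial_seg (S : Finset ℕ) (lo : ℕ)
    (hlo : ∀ k ∈ S, lo ≤ k)
    (hdc : ∀ k ∈ S, ∀ j, lo ≤ j → j < k → j ∈ S) :
    ∀ k, k ∈ S ↔ lo ≤ k ∧ k < lo + S.card := by
  intro k
  constructor
  · intro hk
    refine ⟨hlo k hk, ?_⟩
    have hsub : Finset.Ico lo (k + 1) ⊆ S := by
      intro j hj
      simp only [Finset.mem_Ico] at hj
      rcases Nat.lt_succ_iff_lt_or_eq.mp hj.2 with h | h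
      · exact hdc k hk j hj.1 h
      · exact h ▸ hk
    have := Finset.card_le_card hsub
    rw [Nat.card_Ico] at this
    omega
  · rintro ⟨h1, h2⟩
    by_contra hk
    have hsub : S ⊆ Finset.Ico lo k := by
      intro j hj
      simp only [Finset.mem_Ico]
      refine ⟨hlo j hj, ?_⟩
      rcases lt_trichotomy j k with h | h | h
      · exact h
      · exact absurd (h ▸ hj) hk
      · exact absurd (hdc j hj k h1 h) hk
    have := Finset.card_le_card hsub
    rw [Nat.card_Ico] at this
    omega


-- (b) first block
lemma lt_iff_lt_rOne {r s n₁ : ℕ} {σ : Equiv.Perm (Fin (r + s))}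
    (hσ : IsShuffle (r + s) r σ) (i : Fin (r + s)) (hi : (i : ℕ) < r) :
    (σ i : ℕ) < n₁ ↔ (i : ℕ) < rOne r s n₁ σ := by
  set S := (Finset.univ.filter fun i : Fin (r + s) => (i : ℕ) < r ∧ (σ i : ℕ) < n₁) with hS
  have hmem : ∀ x : Fin (r + s), (x : ℕ) ∈ S.image Fin.val ↔ ((x : ℕ) < r ∧ (σ x : ℕ) < n₁) := by
    intro x
    simp only [hS, Finset.mem_image, Finset.mem_filter, Finset.mem_univ, true_and]
    constructor
    · rintro ⟨y, hy, hxy⟩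
      have : y = x := Fin.ext hxy
      exact this ▸ hy
    · intro hx; exact ⟨x, hx, rfl⟩
  have hcard : (S.image Fin.val).card = rOne r s n₁ σ := by
    rw [Finset.card_image_of_injective _ Fin.val_injective]; rfl
  have key := initial_seg (S.image Fin.val) 0 (fun k _ => Nat.zero_le k) ?_
  · have := key (i : ℕ)
    rw [hmem i, hcard] at this
    constructor
    · intro hv; have := (this.mp ⟨hi, hv⟩).2; omega
    · intro hv; exact ((this.mpr ⟨Nat.zero_le _, by omega⟩).2)
  · intro k hk j _ hjk
    simp only [Finset.mem_image, hS, Finset.mem_filter, Finset.mem_univ, true_and] at hk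
    obtain ⟨k', ⟨hk'r, hk'v⟩, rfl⟩ := hk
    have hjr : j < r := lt_trans hjk hk'r
    have hjn : j < r + s := by omega
    have : (⟨j, hjn⟩ : Fin (r + s)) ∈ S := by
      simp only [hS, Finset.mem_filter, Finset.mem_univ, true_and]
      refine ⟨hjr, lt_trans ?_ hk'v⟩
      exact hσ ⟨j, hjn⟩ k' hjk (Or.inl hk'r)
    exact Finset.mem_image.mpr ⟨_, this, rfl⟩

-- (b) second block
lemma lt_iff_lt_sOne {r s n₁ : ℕ} {σ : Equiv.Perm (Fin (r + s))}
    (hσ : IsShuffle (r + s) r σ) (i : Fin (r + s)) (hi : r ≤ (i : ℕ)) :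
    (σ i : ℕ) < n₁ ↔ (i : ℕ) < r + sOne r s n₁ σ := by
  set S := (Finset.univ.filter fun i : Fin (r + s) => r ≤ (i : ℕ) ∧ (σ i : ℕ) < n₁) with hS
  have hmem : ∀ x : Fin (r + s), (x : ℕ) ∈ S.image Fin.val ↔ (r ≤ (x : ℕ) ∧ (σ x : ℕ) < n₁) := by
    intro x
    simp only [hS, Finset.mem_image, Finset.mem_filter, Finset.mem_univ, true_and]
    constructor
    · rintro ⟨y, hy, hxy⟩
      have : y = x := Fin.ext hxy
      exact this ▸ hy
    · intro hx; exact ⟨x, hx, rfl⟩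
  have hcard : (S.image Fin.val).card = sOne r s n₁ σ := by
    rw [Finset.card_image_of_injective _ Fin.val_injective]; rfl
  have key := initial_seg (S.image Fin.val) r ?_ ?_
  · have := key (i : ℕ)
    rw [hmem i, hcard] at this
    constructor
    · intro hv; exact (this.mp ⟨hi, hv⟩).2
    · intro hv; exact ((this.mpr ⟨hi, hv⟩).2)
  · intro k hk
    simp only [Finset.mem_image, hS, Finset.mem_filter, Finset.mem_univ, true_and] at hk
    obtain ⟨k', ⟨hk'r, _⟩, rfl⟩ := hk
    exact hk'r
  · intro k hk j hjr hjk
    simp only [Finset.mem_image, hS, Finset.mem_filter, Finset.mem_univ, true_and] at hk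
    obtain ⟨k', ⟨hk'r, hk'v⟩, rfl⟩ := hk
    have hjn : j < r + s := lt_trans hjk k'.isLt
    have : (⟨j, hjn⟩ : Fin (r + s)) ∈ S := by
      simp only [hS, Finset.mem_filter, Finset.mem_univ, true_and]
      refine ⟨hjr, lt_trans ?_ hk'v⟩
      exact hσ ⟨j, hjn⟩ k' hjk (Or.inr hjr)
    exact Finset.mem_image.mpr ⟨_, this, rfl⟩

-- (a)
lemma rOne_add_sOne {r s n₁ : ℕ} (hn : n₁ ≤ r + s) (σ : Equiv.Perm (Fin (r + s))) :
    rOne r s n₁ σ + sOne r s n₁ σ = n₁ := by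
  have hsplit := Finset.card_filter_add_card_filter_not
    (s := Finset.univ.filter fun i : Fin (r + s) => (σ i : ℕ) < n₁)
    (p := fun i : Fin (r + s) => (i : ℕ) < r)
  rw [Finset.filter_filter, Finset.filter_filter] at hsplit
  have h1 : (Finset.univ.filter fun i : Fin (r + s) => (σ i : ℕ) < n₁ ∧ (i : ℕ) < r)
      = Finset.univ.filter fun i : Fin (r + s) => (i : ℕ) < r ∧ (σ i : ℕ) < n₁ := by
    simp [and_comm]
  have h2 : (Finset.univ.filter fun i : Fin (r + s) => (σ i : ℕ) < n₁ ∧ ¬(i : ℕ) < r)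
      = Finset.univ.filter fun i : Fin (r + s) => r ≤ (i : ℕ) ∧ (σ i : ℕ) < n₁ := by
    ext x; simp [and_comm, Nat.not_lt]
  have h3 : (Finset.univ.filter fun i : Fin (r + s) => (σ i : ℕ) < n₁)
      = (Finset.univ.filter fun x : Fin (r + s) => (x : ℕ) < n₁).image σ.symm := by
    ext x
    simp only [Finset.mem_filter, Finset.mem_univ, true_and, Finset.mem_image]
    constructor
    · intro hx; exact ⟨σ x, hx, σ.symm_apply_apply x⟩
    · rintro ⟨y, hy, rfl⟩; simpa using hy
  rw [h1, h2, h3] at hsplit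
  rw [Finset.card_image_of_injective _ σ.symm.injective, card_filter_lt hn] at hsplit
  exact hsplit



lemma rOne_le (r s n₁ : ℕ) (σ : Equiv.Perm (Fin (r + s))) : rOne r s n₁ σ ≤ r := by
  unfold rOne
  calc (Finset.univ.filter fun i : Fin (r + s) => (i : ℕ) < r ∧ (σ i : ℕ) < n₁).card
      ≤ (Finset.univ.filter fun i : Fin (r + s) => (i : ℕ) < r).card := by
        apply Finset.card_le_card
        intro x hx
        simp only [Finset.mem_filter, Finset.mem_univ, true_and] at hx ⊢
        exact hx.1
    _ = r := card_filter_lt (Nat.le_add_right r s)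

lemma sOne_le (r s n₁ : ℕ) (σ : Equiv.Perm (Fin (r + s))) : sOne r s n₁ σ ≤ s := by
  unfold sOne
  calc (Finset.univ.filter fun i : Fin (r + s) => r ≤ (i : ℕ) ∧ (σ i : ℕ) < n₁).card
      ≤ (Finset.univ.filter fun i : Fin (r + s) => r ≤ (i : ℕ) ∧ (i : ℕ) < r + s).card := by
        apply Finset.card_le_card
        intro x hx
        simp only [Finset.mem_filter, Finset.mem_univ, true_and] at hx ⊢
        exact ⟨hx.1, x.isLt⟩
    _ = s := card_filter_Ico (le_refl (r + s))

/-- Part (c), abstract form. -/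
lemma partC (r s n₁ n₂ a b : ℕ) (h : n₁ + n₂ = r + s)
    (har : a ≤ r) (hbs : b ≤ s) (hab : a + b = n₁)
    (σ : Equiv.Perm (Fin (r + s))) (hσ : IsShuffle (r + s) r σ)
    (hb1 : ∀ i : Fin (r + s), (i : ℕ) < r → ((σ i : ℕ) < n₁ ↔ (i : ℕ) < a))
    (hb2 : ∀ i : Fin (r + s), r ≤ (i : ℕ) → ((σ i : ℕ) < n₁ ↔ (i : ℕ) < r + b)) :
    ∃! p : Equiv.Perm (Fin n₁) × Equiv.Perm (Fin n₂),
      IsShuffle n₁ a p.1 ∧ IsShuffle n₂ (r - a) p.2 ∧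
      Matches r s n₁ n₂ a b σ p.1 p.2 := by
  have hn : n₁ ≤ r + s := by omega
  have hcover : (r - a) + (s - b) = n₂ := by omega
  -- ap versions of hb1/hb2
  have hv1 : ∀ k, k < r → (ap σ k < n₁ ↔ k < a) := by
    intro k hk; rw [ap_lt σ (by omega : k < r + s)]; exact hb1 ⟨k, by omega⟩ hk
  have hv2 : ∀ k, r ≤ k → k < r + s → (ap σ k < n₁ ↔ k < r + b) := by
    intro k hk hk'; rw [ap_lt σ hk']; exact hb2 ⟨k, hk'⟩ hk
  -- construct σ₁
  have hbd1 : ∀ k : Fin n₁,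
      (if (k : ℕ) < a then ap σ (k : ℕ) else ap σ (r + ((k : ℕ) - a))) < n₁ := by
    intro k
    split_ifs with hk
    · exact (hv1 _ (by omega)).mpr hk
    · have hk2 : (k : ℕ) < n₁ := k.isLt
      exact (hv2 (r + ((k : ℕ) - a)) (by omega) (by omega)).mpr (by omega)
  obtain ⟨σ₁, hσ₁v, hσ₁n⟩ : ∃ σ₁ : Equiv.Perm (Fin n₁), (∀ k : Fin n₁, (σ₁ k : ℕ) =
      (if (k : ℕ) < a then ap σ (k : ℕ) else ap σ (r + ((k : ℕ) - a)))) ∧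
      ∀ (k : ℕ) (hk : k < n₁), ap σ₁ k =
      if k < a then ap σ k else ap σ (r + (k - a)) := by
    have hinj : Function.Injective
        (fun k : Fin n₁ => (⟨_, hbd1 k⟩ : Fin n₁)) := by
      intro k k' hkk
      simp only [Fin.ext_iff] at hkk ⊢
      have hk := k.isLt; have hk' := k'.isLt
      split_ifs at hkk with h1 h2 h2
      · exact ap_inj σ (by omega) (by omega) hkk
      · have := ap_inj σ (by omega) (by omega) hkk; omega
      · have := ap_inj σ (by omega) (by omega) hkk; omega
      · have := ap_inj σ (by omega) (by omega) hkk; omega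
    exact ⟨Equiv.ofBijective _ (Finite.injective_iff_bijective.mp hinj), fun k => rfl,
      fun k hk => by rw [ap_lt _ hk]; rfl⟩
  -- construct σ₂
  have hge1 : ∀ k, a ≤ k → k < r → n₁ ≤ ap σ k := by
    intro k h1 h2; by_contra hc; have := (hv1 k h2).mp (by omega); omega
  have hge2 : ∀ k, r + b ≤ k → k < r + s → n₁ ≤ ap σ k := by
    intro k h1 h2; by_contra hc; have := (hv2 k (by omega) h2).mp (by omega); omega
  have hbd2 : ∀ k : Fin n₂,
      (if (k : ℕ) < r - a then ap σ (a + (k : ℕ)) - n₁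
       else ap σ (r + b + ((k : ℕ) - (r - a))) - n₁) < n₂ := by
    intro k
    split_ifs with hk
    · have := ap_val_lt σ (by omega : a + (k : ℕ) < r + s)
      have := hge1 (a + (k : ℕ)) (by omega) (by omega)
      omega
    · have hk2 : (k : ℕ) < n₂ := k.isLt
      have := ap_val_lt σ (by omega : r + b + ((k : ℕ) - (r - a)) < r + s)
      have := hge2 (r + b + ((k : ℕ) - (r - a))) (by omega) (by omega)
      omega
  obtain ⟨σ₂, hσ₂v, hσ₂n⟩ : ∃ σ₂ : Equiv.Perm (Fin n₂), (∀ k : Fin n₂, (σ₂ k : ℕ) =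
      (if (k : ℕ) < r - a then ap σ (a + (k : ℕ)) - n₁
      else ap σ (r + b + ((k : ℕ) - (r - a))) - n₁)) ∧
      ∀ (k : ℕ) (hk : k < n₂), ap σ₂ k =
      if k < r - a then ap σ (a + k) - n₁
      else ap σ (r + b + (k - (r - a))) - n₁ := by
    have hinj : Function.Injective
        (fun k : Fin n₂ => (⟨_, hbd2 k⟩ : Fin n₂)) := by
      intro k k' hkk
      simp only [Fin.ext_iff] at hkk ⊢
      have hk := k.isLt; have hk' := k'.isLt
      split_ifs at hkk with h1 h2 h2
      · have g1 := hge1 (a + (k : ℕ)) (by omega) (by omega)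
        have g2 := hge1 (a + (k' : ℕ)) (by omega) (by omega)
        have := ap_inj σ (by omega : a + (k:ℕ) < r + s) (by omega) (by omega : ap σ (a+(k:ℕ)) = ap σ (a+(k':ℕ)))
        omega
      · have g1 := hge1 (a + (k : ℕ)) (by omega) (by omega)
        have g2 := hge2 (r + b + ((k' : ℕ) - (r - a))) (by omega) (by omega)
        have := ap_inj σ (by omega : a + (k:ℕ) < r + s)
          (by omega : r + b + ((k':ℕ) - (r - a)) < r + s) (by omega)
        omega
      · have g1 := hge2 (r + b + ((k : ℕ) - (r - a))) (by omega) (by omega)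
        have g2 := hge1 (a + (k' : ℕ)) (by omega) (by omega)
        have := ap_inj σ (by omega : r + b + ((k:ℕ) - (r - a)) < r + s)
          (by omega : a + (k':ℕ) < r + s) (by omega)
        omega
      · have g1 := hge2 (r + b + ((k : ℕ) - (r - a))) (by omega) (by omega)
        have g2 := hge2 (r + b + ((k' : ℕ) - (r - a))) (by omega) (by omega)
        have := ap_inj σ (by omega : r + b + ((k:ℕ) - (r - a)) < r + s)
          (by omega : r + b + ((k':ℕ) - (r - a)) < r + s) (by omega)
        omega
    exact ⟨Equiv.ofBijective _ (Finite.injective_iff_bijective.mp hinj), fun k => rfl,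
      fun k hk => by rw [ap_lt _ hk]; rfl⟩
  refine ⟨⟨σ₁, σ₂⟩, ⟨?_, ?_, ?_, ?_, ?_, ?_⟩, ?_⟩
  · -- σ₁ shuffle
    intro i j hij hc
    rw [Fin.lt_def] at hij ⊢
    rw [hσ₁v i, hσ₁v j]
    have hj := j.isLt
    rcases hc with hc | hc
    · rw [if_pos (lt_trans hij hc), if_pos hc]
      exact ap_mono hσ (by omega) hij (Or.inl (by omega))
    · rw [if_neg (by omega), if_neg (by omega)]
      exact ap_mono hσ (by omega) (by omega) (Or.inr (by omega))
  · -- σ₂ shuffle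
    intro i j hij hc
    rw [Fin.lt_def] at hij ⊢
    rw [hσ₂v i, hσ₂v j]
    have hj := j.isLt
    rcases hc with hc | hc
    · rw [if_pos (lt_trans hij hc), if_pos hc]
      have g1 := hge1 (a + (i : ℕ)) (by omega) (by omega)
      have := ap_mono (i := a + (i : ℕ)) (j := a + (j : ℕ)) hσ (by omega) (by omega)
        (Or.inl (by omega))
      omega
    · rw [if_neg (by omega), if_neg (by omega)]
      have g1 := hge2 (r + b + ((i : ℕ) - (r - a))) (by omega) (by omega)
      have := ap_mono (i := r + b + ((i : ℕ) - (r - a))) (j := r + b + ((j : ℕ) - (r - a)))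
        hσ (by omega) (by omega) (Or.inr (by omega))
      omega
  · -- Matches 1
    intro i hi
    rw [hσ₁n i (by omega), if_pos hi]
  · -- Matches 2
    intro j hj
    rw [hσ₁n (a + j) (by omega), if_neg (by omega)]
    congr 1; omega
  · -- Matches 3
    intro i hi
    rw [hσ₂n i (by omega), if_pos (by omega)]
  · -- Matches 4
    intro j hj
    rw [hσ₂n ((r - a) + j) (by omega), if_neg (by omega)]
    congr 2; omega
  · -- uniqueness
    rintro ⟨q₁, q₂⟩ ⟨_, _, m1, m2, m3, m4⟩
    have e1 : q₁ = σ₁ := by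
      apply perm_ext_of_ap
      intro i hi
      by_cases hia : i < a
      · rw [m1 i hia, hσ₁n i hi, if_pos hia]
      · have hj : i - a < b := by omega
        have hieq : a + (i - a) = i := by omega
        rw [← hieq, m2 _ hj, hσ₁n (a + (i - a)) (by omega), if_neg (by omega)]
        congr 1; omega
    have e2 : q₂ = σ₂ := by
      apply perm_ext_of_ap
      intro i hi
      by_cases hia : i < r - a
      · rw [m3 i hia, hσ₂n i hi, if_pos hia]
      · have hj : i - (r - a) < s - b := by omega
        have hieq : (r - a) + (i - (r - a)) = i := by omega
        rw [← hieq, m4 _ hj, hσ₂n ((r - a) + (i - (r - a))) (by omega), if_neg (by omega)]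
        congr 2; omega
    simp [e1, e2]


/-- Part (d), abstract form. -/
lemma partD (r s n₁ n₂ : ℕ) (h : n₁ + n₂ = r + s) (a b : ℕ)
    (har : a ≤ r) (hbs : b ≤ s) (hab : a + b = n₁)
    (σ₁ : Equiv.Perm (Fin n₁)) (σ₂ : Equiv.Perm (Fin n₂))
    (h1 : IsShuffle n₁ a σ₁) (h2 : IsShuffle n₂ (r - a) σ₂) :
    ∃! σ : Equiv.Perm (Fin (r + s)),
      IsShuffle (r + s) r σ ∧ rOne r s n₁ σ = a ∧ sOne r s n₁ σ = b ∧
      Matches r s n₁ n₂ a b σ σ₁ σ₂ := by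
  have hn : n₁ ≤ r + s := by omega
  have hbd : ∀ k : Fin (r + s),
      (if (k : ℕ) < a then ap σ₁ (k : ℕ)
       else if (k : ℕ) < r then n₁ + ap σ₂ ((k : ℕ) - a)
       else if (k : ℕ) < r + b then ap σ₁ (a + ((k : ℕ) - r))
       else n₁ + ap σ₂ ((r - a) + ((k : ℕ) - (r + b)))) < r + s := by
    intro k
    have hk := k.isLt
    split_ifs with c1 c2 c3
    · have := ap_val_lt σ₁ (by omega : (k : ℕ) < n₁); omega
    · have := ap_val_lt σ₂ (by omega : (k : ℕ) - a < n₂); omega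
    · have := ap_val_lt σ₁ (by omega : a + ((k : ℕ) - r) < n₁); omega
    · have := ap_val_lt σ₂ (by omega : (r - a) + ((k : ℕ) - (r + b)) < n₂); omega
  obtain ⟨σ, hσv, hσn⟩ : ∃ σ : Equiv.Perm (Fin (r + s)), (∀ k : Fin (r + s), (σ k : ℕ) =
      (if (k : ℕ) < a then ap σ₁ (k : ℕ)
       else if (k : ℕ) < r then n₁ + ap σ₂ ((k : ℕ) - a)
       else if (k : ℕ) < r + b then ap σ₁ (a + ((k : ℕ) - r))
       else n₁ + ap σ₂ ((r - a) + ((k : ℕ) - (r + b))))) ∧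
      ∀ (k : ℕ) (hk : k < r + s), ap σ k =
      if k < a then ap σ₁ k
      else if k < r then n₁ + ap σ₂ (k - a)
      else if k < r + b then ap σ₁ (a + (k - r))
      else n₁ + ap σ₂ ((r - a) + (k - (r + b))) := by
    have hinj : Function.Injective
        (fun k : Fin (r + s) => (⟨_, hbd k⟩ : Fin (r + s))) := by
      intro k k' hkk
      simp only [Fin.ext_iff] at hkk ⊢
      have hk := k.isLt; have hk' := k'.isLt
      have b1 : (k : ℕ) < n₁ → ap σ₁ (k : ℕ) < n₁ := fun hh => ap_val_lt σ₁ hh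
      split_ifs at hkk with c1 c2 c3 d1 d2 d3 d2 d3 d2 d3 d3
      all_goals {
        first
        | (exact ap_inj σ₁ (by omega) (by omega) hkk)
        | (have := ap_inj σ₁ (by omega) (by omega) hkk; omega)
        | (have := ap_inj σ₂ (by omega) (by omega) (Nat.add_left_cancel hkk); omega)
        | (have e1 := ap_val_lt σ₁ (by omega : (k : ℕ) < n₁); omega)
        | (have e1 := ap_val_lt σ₁ (by omega : a + ((k : ℕ) - r) < n₁); omega)
        | (have e1 := ap_val_lt σ₁ (by omega : (k' : ℕ) < n₁); omega)
        | (have e1 := ap_val_lt σ₁ (by omega : a + ((k' : ℕ) - r) < n₁); omega)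
      }
    exact ⟨Equiv.ofBijective _ (Finite.injective_iff_bijective.mp hinj), fun k => rfl,
      fun k hk => by rw [ap_lt _ hk]; rfl⟩
  have hvlt : ∀ k : Fin (r + s), ((σ k : ℕ) < n₁ ↔ ((k : ℕ) < a ∨ (r ≤ (k : ℕ) ∧ (k : ℕ) < r + b))) := by
    intro k
    have hk := k.isLt
    rw [hσv k]
    split_ifs with c1 c2 c3
    · have := ap_val_lt σ₁ (by omega : (k : ℕ) < n₁); omega
    · have := ap_val_lt σ₂ (by omega : (k : ℕ) - a < n₂); omega
    · have := ap_val_lt σ₁ (by omega : a + ((k : ℕ) - r) < n₁); omega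
    · have := ap_val_lt σ₂ (by omega : (r - a) + ((k : ℕ) - (r + b)) < n₂); omega
  have hshuf : IsShuffle (r + s) r σ := by
    intro i j hij hc
    rw [Fin.lt_def] at hij ⊢
    rw [hσv i, hσv j]
    have hj := j.isLt
    rcases hc with hc | hc
    · by_cases hia : (i : ℕ) < a
      · by_cases hja : (j : ℕ) < a
        · rw [if_pos hia, if_pos hja]
          exact ap_mono h1 (by omega) hij (Or.inl hja)
        · rw [if_pos hia, if_neg hja, if_pos hc]
          have := ap_val_lt σ₁ (by omega : (i : ℕ) < n₁); omega
      · have hja : ¬ (j : ℕ) < a := by omega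
        rw [if_neg hia, if_pos (by omega : (i : ℕ) < r), if_neg hja, if_pos hc]
        have := ap_mono (i := (i : ℕ) - a) (j := (j : ℕ) - a) h2 (by omega) (by omega)
          (Or.inl (by omega))
        omega
    · by_cases hjb : (j : ℕ) < r + b
      · have hib : (i : ℕ) < r + b := by omega
        rw [if_neg (by omega), if_neg (by omega), if_pos hib,
          if_neg (by omega), if_neg (by omega), if_pos hjb]
        exact ap_mono h1 (by omega) (by omega) (Or.inr (by omega))
      · by_cases hib : (i : ℕ) < r + b
        · rw [if_neg (by omega), if_neg (by omega), if_pos hib,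
            if_neg (by omega), if_neg (by omega), if_neg hjb]
          have := ap_val_lt σ₁ (by omega : a + ((i : ℕ) - r) < n₁); omega
        · rw [if_neg (by omega), if_neg (by omega), if_neg hib,
            if_neg (by omega), if_neg (by omega), if_neg hjb]
          have := ap_mono (i := (r - a) + ((i : ℕ) - (r + b)))
            (j := (r - a) + ((j : ℕ) - (r + b))) h2 (by omega) (by omega)
            (Or.inr (by omega))
          omega
  have hr1 : rOne r s n₁ σ = a := by
    unfold rOne
    have heq : (Finset.univ.filter fun i : Fin (r + s) => (i : ℕ) < r ∧ (σ i : ℕ) < n₁)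
        = Finset.univ.filter fun i : Fin (r + s) => (i : ℕ) < a := by
      ext x
      simp only [Finset.mem_filter, Finset.mem_univ, true_and]
      rw [hvlt x]
      omega
    rw [heq, card_filter_lt (by omega : a ≤ r + s)]
  have hs1 : sOne r s n₁ σ = b := by
    unfold sOne
    have heq : (Finset.univ.filter fun i : Fin (r + s) => r ≤ (i : ℕ) ∧ (σ i : ℕ) < n₁)
        = Finset.univ.filter fun i : Fin (r + s) => r ≤ (i : ℕ) ∧ (i : ℕ) < r + b := by
      ext x
      simp only [Finset.mem_filter, Finset.mem_univ, true_and]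
      rw [hvlt x]
      omega
    rw [heq, card_filter_Ico (by omega : r + b ≤ r + s)]
  refine ⟨σ, ⟨hshuf, hr1, hs1, ?_, ?_, ?_, ?_⟩, ?_⟩
  · intro i hi
    rw [hσn i (by omega), if_pos hi]
  · intro j hj
    rw [hσn (r + j) (by omega), if_neg (by omega), if_neg (by omega), if_pos (by omega)]
    congr 1; omega
  · intro i hi
    rw [hσn (a + i) (by omega), if_neg (by omega), if_pos (by omega)]
    have heq : a + i - a = i := by omega
    rw [heq]; omega
  · intro j hj
    rw [hσn (r + b + j) (by omega), if_neg (by omega), if_neg (by omega), if_neg (by omega)]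
    have heq : r + b + j - (r + b) = j := by omega
    rw [heq]; omega
  · rintro σ' ⟨hs', hr1', hs1', m1, m2, m3, m4⟩
    have hval1' : ∀ (k : ℕ) (hk : k < r + s), k < r → (ap σ' k < n₁ ↔ k < a) := by
      intro k hk hkr
      rw [ap_lt σ' hk, ← hr1']
      exact lt_iff_lt_rOne hs' ⟨k, hk⟩ hkr
    have hval2' : ∀ (k : ℕ) (hk : k < r + s), r ≤ k → (ap σ' k < n₁ ↔ k < r + b) := by
      intro k hk hkr
      rw [ap_lt σ' hk]
      have := lt_iff_lt_sOne (n₁ := n₁) hs' ⟨k, hk⟩ hkr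
      rw [hs1'] at this
      exact this
    apply perm_ext_of_ap
    intro k hk
    rw [hσn k hk]
    by_cases c1 : k < a
    · rw [if_pos c1]; exact (m1 k c1).symm
    · by_cases c2 : k < r
      · rw [if_neg c1, if_pos c2]
        have hm := m3 (k - a) (by omega)
        rw [show a + (k - a) = k from by omega] at hm
        have hge : ¬ ap σ' k < n₁ := fun hcon => c1 ((hval1' k hk c2).mp hcon)
        omega
      · by_cases c3 : k < r + b
        · rw [if_neg c1, if_neg c2, if_pos c3]
          have hm := m2 (k - r) (by omega)
          rw [show r + (k - r) = k from by omega] at hm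
          exact hm.symm
        · rw [if_neg c1, if_neg c2, if_neg c3]
          have hm := m4 (k - (r + b)) (by omega)
          rw [show r + b + (k - (r + b)) = k from by omega] at hm
          have hge : ¬ ap σ' k < n₁ := fun hcon => c3 ((hval2' k hk (by omega)).mp hcon)
          omega


/-- for `n = r+s = n₁+n₂` and `σ ∈ Sh_{r,s}`, setting
`r₁ = #{i < r : σ(i) < n₁}` and `s₁ = #{i ≥ r : σ(i) < n₁}`: (a) `r₁ + s₁ = n₁`;
(b) the indices of the first (resp. second) block sent below `n₁` form the initial
segments `{0,…,r₁-1}` (resp. `{r,…,r+s₁-1}`); (c) there is a unique pair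
`(σ₁, σ₂)` with `σ₁` an `(r₁,s₁)`-shuffle, `σ₂` an `(r−r₁,s−s₁)`-shuffle
satisfying the defining value equations; (d) conversely, for every admissible
datum `(a, σ₁, σ₂)` there is a unique `σ ∈ Sh_{r,s}` inducing it, so
`σ ↦ (r₁, σ₁, σ₂)` is a bijection from `Sh_{r,s}` onto
`⨿_{r₁+s₁=n₁} Sh_{r₁,s₁} × Sh_{r−r₁,s−s₁}`. -/
theorem shuffle_deconcatenation_bijection (r s n₁ n₂ : ℕ) (h : n₁ + n₂ = r + s) :
    (∀ σ : Equiv.Perm (Fin (r + s)), IsShuffle (r + s) r σ →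
      -- (a)
      rOne r s n₁ σ + sOne r s n₁ σ = n₁ ∧
      -- (b)
      (∀ i : Fin (r + s), (i : ℕ) < r →
        ((σ i : ℕ) < n₁ ↔ (i : ℕ) < rOne r s n₁ σ)) ∧
      (∀ i : Fin (r + s), r ≤ (i : ℕ) →
        ((σ i : ℕ) < n₁ ↔ (i : ℕ) < r + sOne r s n₁ σ)) ∧
      -- (c)
      (∃! p : Equiv.Perm (Fin n₁) × Equiv.Perm (Fin n₂),
        IsShuffle n₁ (rOne r s n₁ σ) p.1 ∧
        IsShuffle n₂ (r - rOne r s n₁ σ) p.2 ∧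
        Matches r s n₁ n₂ (rOne r s n₁ σ) (sOne r s n₁ σ) σ p.1 p.2)) ∧
    -- (d)
    (∀ a b : ℕ, a ≤ r → b ≤ s → a + b = n₁ →
      ∀ (σ₁ : Equiv.Perm (Fin n₁)) (σ₂ : Equiv.Perm (Fin n₂)),
        IsShuffle n₁ a σ₁ → IsShuffle n₂ (r - a) σ₂ →
        ∃! σ : Equiv.Perm (Fin (r + s)),
          IsShuffle (r + s) r σ ∧ rOne r s n₁ σ = a ∧ sOne r s n₁ σ = b ∧
          Matches r s n₁ n₂ a b σ σ₁ σ₂) := by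
  constructor
  · intro σ hσ
    have hn : n₁ ≤ r + s := by omega
    have ha := rOne_add_sOne hn σ
    refine ⟨ha, fun i hi => lt_iff_lt_rOne hσ i hi, fun i hi => lt_iff_lt_sOne hσ i hi, ?_⟩
    exact partC r s n₁ n₂ _ _ h (rOne_le r s n₁ σ) (sOne_le r s n₁ σ) ha σ hσ
      (fun i hi => lt_iff_lt_rOne hσ i hi) (fun i hi => lt_iff_lt_sOne hσ i hi)
  · intro a b har hbs hab σ₁ σ₂ h1 h2
    exact partD r s n₁ n₂ h a b har hbs hab σ₁ σ₂ h1 h2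
end

section
/- Let k be a commutative ring, X a set, and c : X × X → k an arbitrary function. For r, s ≥ 0 and functions φ : X^r → k, ψ : X^s → k, define φ *_c ψ : X^{r+s} → k by (φ *_c ψ)(t₁,…,t_{r+s}) = Σ_{σ ∈ Sh_{r,s}} [∏_{i<j, σ(i)>σ(j)} c(t_{σ(i)}, t_{σ(j)})] · φ(t_{σ(1)},…,t_{σ(r)}) · ψ(t_{σ(r+1)},…,t_{σ(r+s)}). Then this shuffle product is associative: for all r, s, t ≥ 0 and all φ : X^r → k, ψ : X^s → k, χ : X^t → k one has (φ *_c ψ) *_c χ = φ *_c (ψ *_c χ) as functions on X^{r+s+t}. Consequently the graded vector space ⊕_{n≥0} Map(X^n, k) is an associative k-algebra under *_c (the function model of the Feigin–Odesskii shuffle algebra). -/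
instance {n r : ℕ} : DecidablePred (IsShuffle n r) := fun _ => by
  unfold IsShuffle; infer_instance


/-- extend a permutation of the first block to `Fin (a+b)` -/
def blockL (b : ℕ) {a : ℕ} (τ : Equiv.Perm (Fin a)) : Equiv.Perm (Fin (a + b)) :=
  Equiv.permCongr finSumFinEquiv (τ.sumCongr (Equiv.refl (Fin b)))

/-- extend a permutation of the second block to `Fin (a+b)` -/
def blockR (a : ℕ) {b : ℕ} (τ : Equiv.Perm (Fin b)) : Equiv.Perm (Fin (a + b)) :=
  Equiv.permCongr finSumFinEquiv ((Equiv.refl (Fin a)).sumCongr τ)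

@[simp] lemma blockL_castAdd {a b : ℕ} (τ : Equiv.Perm (Fin a)) (i : Fin a) :
    blockL b τ (Fin.castAdd b i) = Fin.castAdd b (τ i) := by
  simp [blockL, Equiv.permCongr_apply, ← finSumFinEquiv_apply_left]

@[simp] lemma blockL_natAdd {a b : ℕ} (τ : Equiv.Perm (Fin a)) (j : Fin b) :
    blockL b τ (Fin.natAdd a j) = Fin.natAdd a j := by
  simp [blockL, Equiv.permCongr_apply, ← finSumFinEquiv_apply_right]

@[simp] lemma blockR_castAdd {a b : ℕ} (τ : Equiv.Perm (Fin b)) (i : Fin a) :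
    blockR a τ (Fin.castAdd b i) = Fin.castAdd b i := by
  simp [blockR, Equiv.permCongr_apply, ← finSumFinEquiv_apply_left]

@[simp] lemma blockR_natAdd {a b : ℕ} (τ : Equiv.Perm (Fin b)) (j : Fin b) :
    blockR a τ (Fin.natAdd a j) = Fin.natAdd a (τ j) := by
  simp [blockR, Equiv.permCongr_apply, ← finSumFinEquiv_apply_right]

@[simp] lemma blockL_symm {a b : ℕ} (τ : Equiv.Perm (Fin a)) :
    (blockL b τ).symm = blockL b τ.symm := by
  simp [blockL, Equiv.permCongr]
  rfl

@[simp] lemma blockR_symm {a b : ℕ} (τ : Equiv.Perm (Fin b)) :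
    (blockR a τ).symm = blockR a τ.symm := by
  simp [blockR, Equiv.permCongr]
  rfl

lemma fin_eq_castAdd {a b : ℕ} (x : Fin (a + b)) (h : (x : ℕ) < a) :
    x = Fin.castAdd b ⟨(x : ℕ), h⟩ := Fin.ext rfl

lemma fin_eq_natAdd {a b : ℕ} (x : Fin (a + b)) (h : a ≤ (x : ℕ)) :
    x = Fin.natAdd a ⟨(x : ℕ) - a, by omega⟩ := Fin.ext (by simp; omega)

/-- a triple `(r,s,u)`-shuffle of `Fin n` (`n` should be `r+s+u`). -/
def IsShuffle3 (n r s : ℕ) (ρ : Equiv.Perm (Fin n)) : Prop :=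
  ∀ i j : Fin n, i < j →
    ((j : ℕ) < r ∨ (r ≤ (i : ℕ) ∧ (j : ℕ) < r + s) ∨ r + s ≤ (i : ℕ)) → ρ i < ρ j

instance {n r s : ℕ} : DecidablePred (IsShuffle3 n r s) := fun _ => by
  unfold IsShuffle3; infer_instance

lemma IsShuffle.lt_iff {n r : ℕ} {σ : Equiv.Perm (Fin n)} (hσ : IsShuffle n r σ)
    {i j : Fin n} (hb : ((i : ℕ) < r ∧ (j : ℕ) < r) ∨ (r ≤ (i : ℕ) ∧ r ≤ (j : ℕ))) :
    σ i < σ j ↔ i < j := by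
  constructor
  · intro h
    rcases lt_trichotomy i j with h' | h' | h'
    · exact h'
    · exact absurd (h' ▸ h) (lt_irrefl _)
    · exact absurd (hσ j i h' (by omega)) (not_lt.2 h.le)
  · intro h
    exact hσ i j h (by omega)

/-- inversion-kernel product -/
def invprod {k X : Type*} [CommRing k] (c : X → X → k) {n : ℕ}
    (σ : Equiv.Perm (Fin n)) (t : Fin n → X) : k :=
  ∏ p ∈ Finset.univ.filter
      (fun p : Fin n × Fin n => p.1 < p.2 ∧ σ p.2 < σ p.1),
    c (t (σ p.1)) (t (σ p.2))

lemma blockL_of_le {a b : ℕ} (τ : Equiv.Perm (Fin a)) {x : Fin (a + b)}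
    (h : a ≤ (x : ℕ)) : blockL b τ x = x := by
  conv_lhs => rw [fin_eq_natAdd x h]
  rw [blockL_natAdd, ← fin_eq_natAdd x h]

lemma blockL_val_lt {a b : ℕ} (τ : Equiv.Perm (Fin a)) {x : Fin (a + b)}
    (h : (x : ℕ) < a) : (blockL b τ x : ℕ) = τ ⟨(x : ℕ), h⟩ := by
  conv_lhs => rw [fin_eq_castAdd x h]
  rw [blockL_castAdd]
  simp

lemma blockR_of_lt {a b : ℕ} (τ : Equiv.Perm (Fin b)) {x : Fin (a + b)}
    (h : (x : ℕ) < a) : blockR a τ x = x := by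
  conv_lhs => rw [fin_eq_castAdd x h]
  rw [blockR_castAdd, ← fin_eq_castAdd x h]

lemma blockR_val_le {a b : ℕ} (τ : Equiv.Perm (Fin b)) {x : Fin (a + b)}
    (h : a ≤ (x : ℕ)) :
    (blockR a τ x : ℕ) = a + τ ⟨(x : ℕ) - a, by omega⟩ := by
  conv_lhs => rw [fin_eq_natAdd x h]
  rw [blockR_natAdd]
  simp

lemma IsShuffle.reflect {n r : ℕ} {σ : Equiv.Perm (Fin n)} (hσ : IsShuffle n r σ)
    {i j : Fin n} (hb : ((i : ℕ) < r ∧ (j : ℕ) < r) ∨ (r ≤ (i : ℕ) ∧ r ≤ (j : ℕ)))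
    (h : σ i < σ j) : i < j := (hσ.lt_iff hb).1 h

section
variable {k X : Type*} [CommRing k] (c : X → X → k)

lemma invprod_blockL {m u' : ℕ} {σ : Equiv.Perm (Fin (m + u'))}
    (hσ : IsShuffle (m + u') m σ) (τ : Equiv.Perm (Fin m)) (t : Fin (m + u') → X) :
    invprod c ((blockL u' τ).trans σ) t
      = invprod c σ t * invprod c τ (fun i => t (σ (Fin.castAdd u' i))) := by
  set ρ := (blockL u' τ).trans σ with hρ
  have hρa : ∀ x, ρ x = σ (blockL u' τ x) := fun x => rfl
  unfold invprod
  rw [← Finset.prod_filter_mul_prod_filter_not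
      (Finset.univ.filter (fun p : Fin (m + u') × Fin (m + u') =>
        p.1 < p.2 ∧ ρ p.2 < ρ p.1)) (fun p => m ≤ (p.2 : ℕ)),
    Finset.filter_filter, Finset.filter_filter]
  congr 1
  · -- σ part
    refine Finset.prod_nbij' (fun p => (blockL u' τ p.1, p.2))
      (fun q => ((blockL u' τ).symm q.1, q.2)) ?_ ?_ ?_ ?_ ?_
    · rintro p hp
      simp only [Finset.mem_filter, Finset.mem_univ, true_and] at hp ⊢
      obtain ⟨⟨hp1, hp2⟩, hp3⟩ := hp
      rw [hρa, hρa, blockL_of_le τ hp3] at hp2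
      have h1 : (p.1 : ℕ) < m := by
        by_contra h'
        push_neg at h'
        rw [blockL_of_le τ h'] at hp2
        exact absurd (hσ p.1 p.2 hp1 (Or.inr h')) (not_lt.2 hp2.le)
      refine ⟨?_, hp2⟩
      rw [Fin.lt_def, blockL_val_lt τ h1]
      exact lt_of_lt_of_le (τ ⟨(p.1 : ℕ), h1⟩).isLt hp3
    · rintro q hq
      simp only [Finset.mem_filter, Finset.mem_univ, true_and] at hq ⊢
      obtain ⟨hq1, hq2⟩ := hq
      have h2 : m ≤ (q.2 : ℕ) := by
        by_contra h'
        push_neg at h'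
        have h1 : (q.1 : ℕ) < m := lt_trans (Fin.lt_def.1 hq1) h'
        exact absurd (hσ q.1 q.2 hq1 (Or.inl h')) (not_lt.2 hq2.le)
      have h1 : (q.1 : ℕ) < m := by
        by_contra h'
        push_neg at h'
        exact absurd (hσ q.1 q.2 hq1 (Or.inr h')) (not_lt.2 hq2.le)
      have hv : ((blockL u' τ).symm q.1 : ℕ) < m := by
        rw [blockL_symm, blockL_val_lt τ.symm h1]
        exact (τ.symm ⟨(q.1 : ℕ), h1⟩).isLt
      refine ⟨⟨?_, ?_⟩, h2⟩
      · rw [Fin.lt_def]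
        exact lt_of_lt_of_le hv h2
      · rw [hρa, hρa, blockL_of_le τ h2, Equiv.apply_symm_apply]
        exact hq2
    · rintro p -
      exact Prod.ext (Equiv.symm_apply_apply _ _) rfl
    · rintro q -
      exact Prod.ext (Equiv.apply_symm_apply _ _) rfl
    · rintro p hp
      simp only [Finset.mem_filter, Finset.mem_univ, true_and] at hp
      obtain ⟨⟨hp1, hp2⟩, hp3⟩ := hp
      rw [hρa, hρa, blockL_of_le τ hp3]
  · -- τ part
    refine (Finset.prod_bij (fun (q : Fin m × Fin m) _ =>
      ((Fin.castAdd u' q.1 : Fin (m + u')), (Fin.castAdd u' q.2 : Fin (m + u'))))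
      ?_ ?_ ?_ ?_).symm
    · rintro q hq
      simp only [Finset.mem_filter, Finset.mem_univ, true_and] at hq ⊢
      obtain ⟨hq1, hq2⟩ := hq
      refine ⟨⟨?_, ?_⟩, ?_⟩
      · simp only [Fin.lt_def, Fin.coe_castAdd]
        exact Fin.lt_def.1 hq1
      · rw [hρa, hρa, blockL_castAdd, blockL_castAdd]
        refine hσ _ _ ?_ (Or.inl ?_)
        · simp only [Fin.lt_def, Fin.coe_castAdd]
          exact Fin.lt_def.1 hq2
        · simp only [Fin.coe_castAdd]
          exact (τ q.1).isLt
      · simp only [Fin.coe_castAdd, not_le]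
        exact q.2.isLt
    · rintro q1 h1 q2 h2 heq
      simp only [Prod.ext_iff] at heq ⊢
      exact ⟨Fin.castAdd_injective _ _ heq.1, Fin.castAdd_injective _ _ heq.2⟩
    · rintro p hp
      simp only [Finset.mem_filter, Finset.mem_univ, true_and, not_le] at hp
      obtain ⟨⟨hp1, hp2⟩, hp3⟩ := hp
      have h1 : (p.1 : ℕ) < m := lt_trans (Fin.lt_def.1 hp1) hp3
      refine ⟨(⟨(p.1 : ℕ), h1⟩, ⟨(p.2 : ℕ), hp3⟩), ?_, ?_⟩
      · simp only [Finset.mem_filter, Finset.mem_univ, true_and]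
        rw [hρa, hρa] at hp2
        conv_lhs at hp2 => rw [fin_eq_castAdd p.2 hp3, blockL_castAdd]
        conv_rhs at hp2 => rw [fin_eq_castAdd p.1 h1, blockL_castAdd]
        have hr := hσ.reflect (i := Fin.castAdd u' (τ ⟨(p.2 : ℕ), hp3⟩))
          (j := Fin.castAdd u' (τ ⟨(p.1 : ℕ), h1⟩))
          (Or.inl ⟨by simp only [Fin.coe_castAdd]; exact (τ _).isLt,
            by simp only [Fin.coe_castAdd]; exact (τ _).isLt⟩) hp2
        refine ⟨by simp only [Fin.lt_def]; exact Fin.lt_def.1 hp1, ?_⟩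
        simpa only [Fin.lt_def, Fin.coe_castAdd] using hr
      · exact Prod.ext (fin_eq_castAdd p.1 h1).symm (fin_eq_castAdd p.2 hp3).symm
    · rintro q hq
      rw [hρa, hρa, blockL_castAdd, blockL_castAdd]

end

section
variable {k X : Type*} [CommRing k] (c : X → X → k)

lemma invprod_blockR {r' m : ℕ} {σ : Equiv.Perm (Fin (r' + m))}
    (hσ : IsShuffle (r' + m) r' σ) (τ : Equiv.Perm (Fin m)) (t : Fin (r' + m) → X) :
    invprod c ((blockR r' τ).trans σ) t
      = invprod c σ t * invprod c τ (fun j => t (σ (Fin.natAdd r' j))) := by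
  set ρ := (blockR r' τ).trans σ with hρ
  have hρa : ∀ x, ρ x = σ (blockR r' τ x) := fun x => rfl
  unfold invprod
  rw [← Finset.prod_filter_mul_prod_filter_not
      (Finset.univ.filter (fun p : Fin (r' + m) × Fin (r' + m) =>
        p.1 < p.2 ∧ ρ p.2 < ρ p.1)) (fun p => (p.1 : ℕ) < r'),
    Finset.filter_filter, Finset.filter_filter]
  congr 1
  · -- σ part
    refine Finset.prod_nbij' (fun p => (p.1, blockR r' τ p.2))
      (fun q => (q.1, (blockR r' τ).symm q.2)) ?_ ?_ ?_ ?_ ?_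
    · rintro p hp
      simp only [Finset.mem_filter, Finset.mem_univ, true_and] at hp ⊢
      obtain ⟨⟨hp1, hp2⟩, hp3⟩ := hp
      rw [hρa, hρa, blockR_of_lt τ hp3] at hp2
      have h2 : r' ≤ (p.2 : ℕ) := by
        by_contra h'
        push_neg at h'
        rw [blockR_of_lt τ h'] at hp2
        exact absurd (hσ p.1 p.2 hp1 (Or.inl h')) (not_lt.2 hp2.le)
      refine ⟨?_, hp2⟩
      rw [Fin.lt_def, blockR_val_le τ h2]
      omega
    · rintro q hq
      simp only [Finset.mem_filter, Finset.mem_univ, true_and] at hq ⊢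
      obtain ⟨hq1, hq2⟩ := hq
      have h1 : (q.1 : ℕ) < r' := by
        by_contra h'
        push_neg at h'
        exact absurd (hσ q.1 q.2 hq1 (Or.inr h')) (not_lt.2 hq2.le)
      have h2 : r' ≤ (q.2 : ℕ) := by
        by_contra h'
        push_neg at h'
        exact absurd (hσ q.1 q.2 hq1 (Or.inl h')) (not_lt.2 hq2.le)
      have hv : r' ≤ ((blockR r' τ).symm q.2 : ℕ) := by
        rw [blockR_symm, blockR_val_le τ.symm h2]
        omega
      refine ⟨⟨?_, ?_⟩, h1⟩
      · rw [Fin.lt_def]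
        omega
      · rw [hρa, hρa, blockR_of_lt τ h1, Equiv.apply_symm_apply]
        exact hq2
    · rintro p -
      exact Prod.ext rfl (Equiv.symm_apply_apply _ _)
    · rintro q -
      exact Prod.ext rfl (Equiv.apply_symm_apply _ _)
    · rintro p hp
      simp only [Finset.mem_filter, Finset.mem_univ, true_and] at hp
      obtain ⟨⟨hp1, hp2⟩, hp3⟩ := hp
      rw [hρa, hρa, blockR_of_lt τ hp3]
  · -- τ part
    refine (Finset.prod_bij (fun (q : Fin m × Fin m) _ =>
      ((Fin.natAdd r' q.1 : Fin (r' + m)), (Fin.natAdd r' q.2 : Fin (r' + m))))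
      ?_ ?_ ?_ ?_).symm
    · rintro q hq
      simp only [Finset.mem_filter, Finset.mem_univ, true_and] at hq ⊢
      obtain ⟨hq1, hq2⟩ := hq
      refine ⟨⟨?_, ?_⟩, ?_⟩
      · simp only [Fin.lt_def, Fin.coe_natAdd]
        have := Fin.lt_def.1 hq1
        omega
      · rw [hρa, hρa, blockR_natAdd, blockR_natAdd]
        refine hσ _ _ ?_ (Or.inr ?_)
        · simp only [Fin.lt_def, Fin.coe_natAdd]
          have := Fin.lt_def.1 hq2
          omega
        · simp only [Fin.coe_natAdd]
          omega
      · simp only [Fin.coe_natAdd, not_lt]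
        omega
    · rintro q1 h1 q2 h2 heq
      simp only [Prod.ext_iff, Fin.ext_iff, Fin.coe_natAdd] at heq ⊢
      omega
    · rintro p hp
      simp only [Finset.mem_filter, Finset.mem_univ, true_and, not_lt] at hp
      obtain ⟨⟨hp1, hp2⟩, hp3⟩ := hp
      have h2 : r' ≤ (p.2 : ℕ) := le_trans hp3 (Fin.lt_def.1 hp1).le
      have b1 : (p.1 : ℕ) - r' < m := by have := p.1.isLt; omega
      have b2 : (p.2 : ℕ) - r' < m := by have := p.2.isLt; omega
      refine ⟨(⟨(p.1 : ℕ) - r', b1⟩, ⟨(p.2 : ℕ) - r', b2⟩), ?_, ?_⟩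
      · simp only [Finset.mem_filter, Finset.mem_univ, true_and]
        rw [hρa, hρa] at hp2
        conv_lhs at hp2 => rw [fin_eq_natAdd p.2 h2, blockR_natAdd]
        conv_rhs at hp2 => rw [fin_eq_natAdd p.1 hp3, blockR_natAdd]
        have hr := hσ.reflect
          (i := Fin.natAdd r' (τ ⟨(p.2 : ℕ) - r', b2⟩))
          (j := Fin.natAdd r' (τ ⟨(p.1 : ℕ) - r', b1⟩))
          (Or.inr ⟨by simp only [Fin.coe_natAdd]; omega,
            by simp only [Fin.coe_natAdd]; omega⟩) hp2
        constructor
        · simp only [Fin.lt_def]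
          have := Fin.lt_def.1 hp1
          omega
        · simpa only [Fin.lt_def, Fin.coe_natAdd, add_lt_add_iff_left] using hr
      · refine Prod.ext ?_ ?_
        · exact (fin_eq_natAdd p.1 hp3).symm
        · exact (fin_eq_natAdd p.2 h2).symm
    · rintro q hq
      rw [hρa, hρa, blockR_natAdd, blockR_natAdd]

end

/-- The shuffle product `φ *_c ψ` of functions `φ : X^r → k`, `ψ : X^s → k` with
kernel `c : X × X → k`:
`(φ *_c ψ)(t) = Σ_{σ ∈ Sh_{r,s}} [∏_{i<j, σ(i)>σ(j)} c(t_{σ(i)}, t_{σ(j)})] ·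
φ(t_{σ(1)},…,t_{σ(r)}) · ψ(t_{σ(r+1)},…,t_{σ(r+s)})`. -/
def shuffleMul {k X : Type*} [CommRing k] (c : X → X → k) {r s : ℕ}
    (φ : (Fin r → X) → k) (ψ : (Fin s → X) → k) : (Fin (r + s) → X) → k :=
  fun t =>
    ∑ σ ∈ Finset.univ.filter (IsShuffle (r + s) r),
      (∏ p ∈ Finset.univ.filter
          (fun p : Fin (r + s) × Fin (r + s) => p.1 < p.2 ∧ σ p.2 < σ p.1),
        c (t (σ p.1)) (t (σ p.2))) *
      φ (fun i => t (σ (Fin.castAdd s i))) * ψ (fun j => t (σ (Fin.natAdd r j)))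

section
variable {k X : Type*} [CommRing k] (c : X → X → k)

lemma shuffleMul_eq {r s : ℕ} (φ : (Fin r → X) → k) (ψ : (Fin s → X) → k)
    (t : Fin (r + s) → X) :
    shuffleMul c φ ψ t =
      ∑ σ ∈ Finset.univ.filter (IsShuffle (r + s) r),
        invprod c σ t *
        φ (fun i => t (σ (Fin.castAdd s i))) * ψ (fun j => t (σ (Fin.natAdd r j))) := rfl

lemma left_expand {r s u : ℕ} (φ : (Fin r → X) → k) (ψ : (Fin s → X) → k)
    (χ : (Fin u → X) → k) (t : Fin (r + s + u) → X) :
    shuffleMul c (shuffleMul c φ ψ) χ t =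
      ∑ ρ ∈ Finset.univ.filter (IsShuffle3 (r + s + u) r s),
        invprod c ρ t * φ (fun i => t (ρ (Fin.castAdd u (Fin.castAdd s i))))
          * ψ (fun i => t (ρ (Fin.castAdd u (Fin.natAdd r i))))
          * χ (fun i => t (ρ (Fin.natAdd (r + s) i))) := by
  rw [shuffleMul_eq]
  simp only [shuffleMul_eq, Finset.sum_mul, Finset.mul_sum]
  rw [← Finset.sum_product']
  refine Finset.sum_nbij'
    (fun p => (blockL u p.2).trans p.1)
    (fun ρ => ((blockL u (Tuple.sort (fun i : Fin (r + s) => ρ (Fin.castAdd u i))).symm).symm.trans ρ,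
      (Tuple.sort (fun i : Fin (r + s) => ρ (Fin.castAdd u i))).symm))
    ?_ ?_ ?_ ?_ ?_
  · -- forward membership
    rintro ⟨σ, τ⟩ hp
    rw [Finset.mem_product, Finset.mem_filter, Finset.mem_filter] at hp
    obtain ⟨⟨-, hσ⟩, ⟨-, hτ⟩⟩ := hp
    simp only [Finset.mem_filter, Finset.mem_univ, true_and]
    intro i j hij hcond
    have hijv := Fin.lt_def.1 hij
    rcases hcond with h | ⟨h1, h2⟩ | h
    · have hi' : (i : ℕ) < r + s := by omega
      have hj' : (j : ℕ) < r + s := by omega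
      rw [fin_eq_castAdd i hi', fin_eq_castAdd j hj']
      simp only [Equiv.trans_apply, blockL_castAdd]
      refine hσ _ _ ?_ (Or.inl (by simp only [Fin.coe_castAdd]; exact (τ _).isLt))
      simp only [Fin.lt_def, Fin.coe_castAdd]
      exact Fin.lt_def.1 (hτ ⟨(i : ℕ), hi'⟩ ⟨(j : ℕ), hj'⟩ (Fin.mk_lt_mk.mpr (by omega))
        (Or.inl h))
    · have hi' : (i : ℕ) < r + s := by omega
      rw [fin_eq_castAdd i hi', fin_eq_castAdd j h2]
      simp only [Equiv.trans_apply, blockL_castAdd]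
      refine hσ _ _ ?_ (Or.inl (by simp only [Fin.coe_castAdd]; exact (τ _).isLt))
      simp only [Fin.lt_def, Fin.coe_castAdd]
      exact Fin.lt_def.1 (hτ ⟨(i : ℕ), hi'⟩ ⟨(j : ℕ), h2⟩ (Fin.mk_lt_mk.mpr (by omega))
        (Or.inr h1))
    · have hj' : r + s ≤ (j : ℕ) := by omega
      rw [fin_eq_natAdd i h, fin_eq_natAdd j hj']
      simp only [Equiv.trans_apply, blockL_natAdd]
      refine hσ _ _ ?_ (Or.inr (by simp only [Fin.coe_natAdd]; omega))
      simp only [Fin.lt_def, Fin.coe_natAdd]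
      omega
  · -- backward membership
    rintro ρ hρmem
    rw [Finset.mem_filter] at hρmem
    obtain ⟨-, hρ⟩ := hρmem
    set g : Fin (r + s) → Fin (r + s + u) := fun i => ρ (Fin.castAdd u i) with hgdef
    have ginj : Function.Injective g := fun a b hab =>
      Fin.castAdd_injective _ _ (ρ.injective hab)
    have hmono : StrictMono (g ∘ (Tuple.sort g)) :=
      (Tuple.monotone_sort g).strictMono_of_injective (ginj.comp (Equiv.injective _))
    rw [Finset.mem_product, Finset.mem_filter, Finset.mem_filter]
    refine ⟨⟨Finset.mem_univ _, ?_⟩, Finset.mem_univ _, ?_⟩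
    · -- σ₀ is a shuffle
      intro i j hij hcond
      have hijv := Fin.lt_def.1 hij
      simp only [Equiv.trans_apply, blockL_symm, Equiv.symm_symm]
      rcases hcond with h | h
      · have hi' : (i : ℕ) < r + s := by omega
        rw [fin_eq_castAdd i hi', fin_eq_castAdd j h]
        simp only [blockL_castAdd]
        have := hmono (show (⟨(i : ℕ), hi'⟩ : Fin (r + s)) < ⟨(j : ℕ), h⟩ from
          Fin.mk_lt_mk.mpr (by omega))
        simpa only [Function.comp_apply, hgdef] using this
      · have hj' : r + s ≤ (j : ℕ) := by omega
        rw [fin_eq_natAdd i h, fin_eq_natAdd j hj']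
        simp only [blockL_natAdd]
        exact hρ _ _ (by simp only [Fin.lt_def, Fin.coe_natAdd]; omega)
          (Or.inr (Or.inr (by simp only [Fin.coe_natAdd]; omega)))
    · -- τ₀ is a shuffle
      intro i j hij hcond
      have key : g i < g j := by
        refine hρ _ _ (by simp only [Fin.lt_def, Fin.coe_castAdd]; exact Fin.lt_def.1 hij) ?_
        rcases hcond with h | h
        · exact Or.inl (by simp only [Fin.coe_castAdd]; exact h)
        · exact Or.inr (Or.inl ⟨by simp only [Fin.coe_castAdd]; exact h,
            by simp only [Fin.coe_castAdd]; exact j.isLt⟩)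
      have := hmono.lt_iff_lt (a := (Tuple.sort g).symm i) (b := (Tuple.sort g).symm j)
      simp only [Function.comp_apply, Equiv.apply_symm_apply] at this
      exact this.1 key
  · -- left inverse
    rintro ⟨σ, τ⟩ hp
    rw [Finset.mem_product, Finset.mem_filter, Finset.mem_filter] at hp
    obtain ⟨⟨-, hσ⟩, ⟨-, hτ⟩⟩ := hp
    have hg' : (fun i : Fin (r + s) => ((blockL u τ).trans σ) (Fin.castAdd u i))
        = fun i => σ (Fin.castAdd u (τ i)) := by
      funext i
      simp only [Equiv.trans_apply, blockL_castAdd]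
    have hsort : Tuple.sort (fun i : Fin (r + s) => ((blockL u τ).trans σ) (Fin.castAdd u i))
        = τ.symm := by
      rw [hg']
      symm
      rw [Tuple.eq_sort_iff]
      constructor
      · intro a b hab
        simp only [Function.comp_apply, Equiv.apply_symm_apply]
        rcases eq_or_lt_of_le hab with h | h
        · rw [h]
        · exact (hσ _ _ (by simp only [Fin.lt_def, Fin.coe_castAdd]; exact Fin.lt_def.1 h)
            (Or.inl (by simp only [Fin.coe_castAdd]; exact b.isLt))).le
      · intro a b hab heq
        simp only [Equiv.apply_symm_apply] at heq
        exact absurd (Fin.castAdd_injective _ _ (σ.injective heq))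
          (by intro h; rw [h] at hab; exact lt_irrefl _ hab)
    refine Prod.ext ?_ ?_
    · show ((blockL u (Tuple.sort _).symm).symm.trans ((blockL u τ).trans σ)) = σ
      rw [hsort, Equiv.symm_symm, ← Equiv.trans_assoc, Equiv.symm_trans_self,
        Equiv.refl_trans]
    · show (Tuple.sort _).symm = τ
      rw [hsort, Equiv.symm_symm]
  · -- right inverse
    rintro ρ -
    show ((blockL u _).trans ((blockL u _).symm.trans ρ)) = ρ
    rw [← Equiv.trans_assoc, Equiv.self_trans_symm, Equiv.refl_trans]
  · -- values
    rintro ⟨σ, τ⟩ hp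
    rw [Finset.mem_product, Finset.mem_filter, Finset.mem_filter] at hp
    obtain ⟨⟨-, hσ⟩, ⟨-, hτ⟩⟩ := hp
    have hfac := invprod_blockL c hσ τ t
    have hA : (fun i : Fin r => (fun i' : Fin (r + s) => t (σ (Fin.castAdd u i')))
          (τ (Fin.castAdd s i)))
        = fun i => t (((blockL u τ).trans σ) (Fin.castAdd u (Fin.castAdd s i))) := by
      funext i
      simp only [Equiv.trans_apply, blockL_castAdd]
    have hB : (fun i : Fin s => (fun i' : Fin (r + s) => t (σ (Fin.castAdd u i')))
          (τ (Fin.natAdd r i)))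
        = fun i => t (((blockL u τ).trans σ) (Fin.castAdd u (Fin.natAdd r i))) := by
      funext i
      simp only [Equiv.trans_apply, blockL_castAdd]
    have hC : (fun i : Fin u => t (σ (Fin.natAdd (r + s) i)))
        = fun i => t (((blockL u τ).trans σ) (Fin.natAdd (r + s) i)) := by
      funext i
      simp only [Equiv.trans_apply, blockL_natAdd]
    simp only [Equiv.trans_apply] at hA hB hC ⊢
    rw [← hA, ← hB, ← hC, hfac]
    ring

end

section
variable {k X : Type*} [CommRing k] (c : X → X → k)

lemma fin_natAdd_injective {a b : ℕ} : Function.Injective (@Fin.natAdd a b) := by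
  intro x y h
  have := Fin.ext_iff.1 h
  simp only [Fin.coe_natAdd] at this
  exact Fin.ext (by omega)

lemma right_expand {r s u : ℕ} (φ : (Fin r → X) → k) (ψ : (Fin s → X) → k)
    (χ : (Fin u → X) → k) (t : Fin (r + (s + u)) → X) :
    shuffleMul c φ (shuffleMul c ψ χ) t =
      ∑ ρ ∈ Finset.univ.filter (IsShuffle3 (r + (s + u)) r s),
        invprod c ρ t * φ (fun i => t (ρ (Fin.castAdd (s + u) i)))
          * ψ (fun i => t (ρ (Fin.natAdd r (Fin.castAdd u i))))
          * χ (fun i => t (ρ (Fin.natAdd r (Fin.natAdd s i)))) := by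
  rw [shuffleMul_eq]
  simp only [shuffleMul_eq, Finset.sum_mul, Finset.mul_sum]
  rw [← Finset.sum_product']
  refine Finset.sum_nbij'
    (fun p => (blockR r p.2).trans p.1)
    (fun ρ => ((blockR r (Tuple.sort (fun j : Fin (s + u) => ρ (Fin.natAdd r j))).symm).symm.trans ρ,
      (Tuple.sort (fun j : Fin (s + u) => ρ (Fin.natAdd r j))).symm))
    ?_ ?_ ?_ ?_ ?_
  · -- forward membership
    rintro ⟨σ, τ⟩ hp
    rw [Finset.mem_product, Finset.mem_filter, Finset.mem_filter] at hp
    obtain ⟨⟨-, hσ⟩, ⟨-, hτ⟩⟩ := hp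
    simp only [Finset.mem_filter, Finset.mem_univ, true_and]
    intro i j hij hcond
    have hijv := Fin.lt_def.1 hij
    have hjb := j.isLt
    rcases hcond with h | ⟨h1, h2⟩ | h
    · have hi' : (i : ℕ) < r := by omega
      rw [fin_eq_castAdd i hi', fin_eq_castAdd j h]
      simp only [Equiv.trans_apply, blockR_castAdd]
      exact hσ _ _ (by rw [Fin.lt_def]; simp only [Fin.coe_castAdd]; omega)
        (Or.inl (by simp only [Fin.coe_castAdd]; exact h))
    · have hj' : r ≤ (j : ℕ) := by omega
      have bi : (i : ℕ) - r < s + u := by omega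
      have bj : (j : ℕ) - r < s + u := by omega
      rw [fin_eq_natAdd i h1, fin_eq_natAdd j hj']
      simp only [Equiv.trans_apply, blockR_natAdd]
      refine hσ _ _ ?_ (Or.inr (by simp only [Fin.coe_natAdd]; omega))
      rw [Fin.lt_def]
      simp only [Fin.coe_natAdd, add_lt_add_iff_left]
      exact Fin.lt_def.1 (hτ ⟨(i : ℕ) - r, bi⟩ ⟨(j : ℕ) - r, bj⟩
        (Fin.mk_lt_mk.mpr (by omega)) (Or.inl (by simp only; omega)))
    · have hi' : r ≤ (i : ℕ) := by omega
      have hj' : r ≤ (j : ℕ) := by omega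
      have bi : (i : ℕ) - r < s + u := by omega
      have bj : (j : ℕ) - r < s + u := by omega
      rw [fin_eq_natAdd i hi', fin_eq_natAdd j hj']
      simp only [Equiv.trans_apply, blockR_natAdd]
      refine hσ _ _ ?_ (Or.inr (by simp only [Fin.coe_natAdd]; omega))
      rw [Fin.lt_def]
      simp only [Fin.coe_natAdd, add_lt_add_iff_left]
      exact Fin.lt_def.1 (hτ ⟨(i : ℕ) - r, bi⟩ ⟨(j : ℕ) - r, bj⟩
        (Fin.mk_lt_mk.mpr (by omega)) (Or.inr (by simp only; omega)))
  · -- backward membership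
    rintro ρ hρmem
    rw [Finset.mem_filter] at hρmem
    obtain ⟨-, hρ⟩ := hρmem
    set g : Fin (s + u) → Fin (r + (s + u)) := fun j => ρ (Fin.natAdd r j) with hgdef
    have ginj : Function.Injective g := fun a b hab =>
      fin_natAdd_injective (ρ.injective hab)
    have hmono : StrictMono (g ∘ (Tuple.sort g)) :=
      (Tuple.monotone_sort g).strictMono_of_injective (ginj.comp (Equiv.injective _))
    rw [Finset.mem_product, Finset.mem_filter, Finset.mem_filter]
    refine ⟨⟨Finset.mem_univ _, ?_⟩, Finset.mem_univ _, ?_⟩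
    · -- σ₀ is a shuffle
      intro i j hij hcond
      have hijv := Fin.lt_def.1 hij
      simp only [Equiv.trans_apply, blockR_symm, Equiv.symm_symm]
      rcases hcond with h | h
      · have hi' : (i : ℕ) < r := by omega
        rw [fin_eq_castAdd i hi', fin_eq_castAdd j h]
        simp only [blockR_castAdd]
        exact hρ _ _ (by rw [Fin.lt_def]; simp only [Fin.coe_castAdd]; omega)
          (Or.inl (by simp only [Fin.coe_castAdd]; exact h))
      · have hj' : r ≤ (j : ℕ) := by omega
        have bi : (i : ℕ) - r < s + u := by have := i.isLt; omega
        have bj : (j : ℕ) - r < s + u := by have := j.isLt; omega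
        rw [fin_eq_natAdd i h, fin_eq_natAdd j hj']
        simp only [blockR_natAdd]
        have := hmono (show (⟨(i : ℕ) - r, bi⟩ : Fin (s + u)) < ⟨(j : ℕ) - r, bj⟩ from
          Fin.mk_lt_mk.mpr (by omega))
        simpa only [Function.comp_apply, hgdef] using this
    · -- τ₀ is a shuffle
      intro i j hij hcond
      have key : g i < g j := by
        have hijv := Fin.lt_def.1 hij
        refine hρ _ _ (by rw [Fin.lt_def]; simp only [Fin.coe_natAdd]; omega) ?_
        rcases hcond with h | h
        · exact Or.inr (Or.inl ⟨by simp only [Fin.coe_natAdd]; omega,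
            by simp only [Fin.coe_natAdd]; omega⟩)
        · exact Or.inr (Or.inr (by simp only [Fin.coe_natAdd]; omega))
      have := hmono.lt_iff_lt (a := (Tuple.sort g).symm i) (b := (Tuple.sort g).symm j)
      simp only [Function.comp_apply, Equiv.apply_symm_apply] at this
      exact this.1 key
  · -- left inverse
    rintro ⟨σ, τ⟩ hp
    rw [Finset.mem_product, Finset.mem_filter, Finset.mem_filter] at hp
    obtain ⟨⟨-, hσ⟩, ⟨-, hτ⟩⟩ := hp
    have hg' : (fun j : Fin (s + u) => ((blockR r τ).trans σ) (Fin.natAdd r j))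
        = fun j => σ (Fin.natAdd r (τ j)) := by
      funext j
      simp only [Equiv.trans_apply, blockR_natAdd]
    have hsort : Tuple.sort (fun j : Fin (s + u) => ((blockR r τ).trans σ) (Fin.natAdd r j))
        = τ.symm := by
      rw [hg']
      symm
      rw [Tuple.eq_sort_iff]
      constructor
      · intro a b hab
        simp only [Function.comp_apply, Equiv.apply_symm_apply]
        rcases eq_or_lt_of_le hab with h | h
        · rw [h]
        · refine (hσ _ _ ?_ (Or.inr (by simp only [Fin.coe_natAdd]; omega))).le
          rw [Fin.lt_def]
          simp only [Fin.coe_natAdd, add_lt_add_iff_left]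
          exact Fin.lt_def.1 h
      · intro a b hab heq
        simp only [Equiv.apply_symm_apply] at heq
        exact absurd (fin_natAdd_injective (σ.injective heq))
          (by intro h; rw [h] at hab; exact lt_irrefl _ hab)
    refine Prod.ext ?_ ?_
    · show ((blockR r (Tuple.sort _).symm).symm.trans ((blockR r τ).trans σ)) = σ
      rw [hsort, Equiv.symm_symm, ← Equiv.trans_assoc, Equiv.symm_trans_self,
        Equiv.refl_trans]
    · show (Tuple.sort _).symm = τ
      rw [hsort, Equiv.symm_symm]
  · -- right inverse
    rintro ρ -
    show ((blockR r _).trans ((blockR r _).symm.trans ρ)) = ρ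
    rw [← Equiv.trans_assoc, Equiv.self_trans_symm, Equiv.refl_trans]
  · -- values
    rintro ⟨σ, τ⟩ hp
    rw [Finset.mem_product, Finset.mem_filter, Finset.mem_filter] at hp
    obtain ⟨⟨-, hσ⟩, ⟨-, hτ⟩⟩ := hp
    have hfac := invprod_blockR c hσ τ t
    have hA : (fun i : Fin r => t (σ (Fin.castAdd (s + u) i)))
        = fun i => t (((blockR r τ).trans σ) (Fin.castAdd (s + u) i)) := by
      funext i
      simp only [Equiv.trans_apply, blockR_castAdd]
    have hB : (fun i : Fin s => (fun j : Fin (s + u) => t (σ (Fin.natAdd r j)))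
          (τ (Fin.castAdd u i)))
        = fun i => t (((blockR r τ).trans σ) (Fin.natAdd r (Fin.castAdd u i))) := by
      funext i
      simp only [Equiv.trans_apply, blockR_natAdd]
    have hC : (fun i : Fin u => (fun j : Fin (s + u) => t (σ (Fin.natAdd r j)))
          (τ (Fin.natAdd s i)))
        = fun i => t (((blockR r τ).trans σ) (Fin.natAdd r (Fin.natAdd s i))) := by
      funext i
      simp only [Equiv.trans_apply, blockR_natAdd]
    simp only [Equiv.trans_apply] at hA hB hC ⊢
    rw [← hA, ← hB, ← hC, hfac]
    ring

end

section
variable {k X : Type*} [CommRing k] (c : X → X → k)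

lemma transport {r s u : ℕ} (φ : (Fin r → X) → k) (ψ : (Fin s → X) → k)
    (χ : (Fin u → X) → k) (t : Fin (r + s + u) → X) :
    (∑ ρ ∈ Finset.univ.filter (IsShuffle3 (r + (s + u)) r s),
      invprod c ρ (fun i => t (finCongr (Nat.add_assoc r s u).symm i))
        * φ (fun i => t (finCongr (Nat.add_assoc r s u).symm (ρ (Fin.castAdd (s + u) i))))
        * ψ (fun i => t (finCongr (Nat.add_assoc r s u).symm (ρ (Fin.natAdd r (Fin.castAdd u i)))))
        * χ (fun i => t (finCongr (Nat.add_assoc r s u).symm (ρ (Fin.natAdd r (Fin.natAdd s i))))))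
    = ∑ ρ ∈ Finset.univ.filter (IsShuffle3 (r + s + u) r s),
      invprod c ρ t * φ (fun i => t (ρ (Fin.castAdd u (Fin.castAdd s i))))
        * ψ (fun i => t (ρ (Fin.castAdd u (Fin.natAdd r i))))
        * χ (fun i => t (ρ (Fin.natAdd (r + s) i))) := by
  have e := finCongr (Nat.add_assoc r s u).symm
  refine Finset.sum_nbij'
    (fun ρ => ((finCongr (Nat.add_assoc r s u).symm).symm.trans ρ).trans
      (finCongr (Nat.add_assoc r s u).symm))
    (fun ρ' => ((finCongr (Nat.add_assoc r s u).symm).trans ρ').trans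
      (finCongr (Nat.add_assoc r s u).symm).symm)
    ?_ ?_ ?_ ?_ ?_
  · rintro ρ hm
    simp only [Finset.mem_filter, Finset.mem_univ, true_and] at hm ⊢
    intro i j hij hcond
    have key := hm ((finCongr (Nat.add_assoc r s u).symm).symm i)
      ((finCongr (Nat.add_assoc r s u).symm).symm j)
      (by simp only [Fin.lt_def, finCongr_symm, finCongr_apply, Fin.coe_cast]
          exact Fin.lt_def.1 hij)
      (by simpa only [finCongr_symm, finCongr_apply, Fin.coe_cast] using hcond)
    simp only [Equiv.trans_apply, Fin.lt_def, finCongr_apply, Fin.coe_cast]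
    exact Fin.lt_def.1 key
  · rintro ρ' hm
    simp only [Finset.mem_filter, Finset.mem_univ, true_and] at hm ⊢
    intro i j hij hcond
    have key := hm ((finCongr (Nat.add_assoc r s u).symm) i)
      ((finCongr (Nat.add_assoc r s u).symm) j)
      (by simp only [Fin.lt_def, finCongr_apply, Fin.coe_cast]
          exact Fin.lt_def.1 hij)
      (by simpa only [finCongr_apply, Fin.coe_cast] using hcond)
    simp only [Equiv.trans_apply, Fin.lt_def, finCongr_symm, finCongr_apply, Fin.coe_cast]
    exact Fin.lt_def.1 key
  · rintro ρ -
    ext x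
    simp only [Equiv.trans_apply, Equiv.symm_apply_apply, Equiv.apply_symm_apply]
  · rintro ρ' -
    ext x
    simp only [Equiv.trans_apply, Equiv.symm_apply_apply, Equiv.apply_symm_apply]
  · rintro ρ -
    have harg1 : ∀ i : Fin r,
        (finCongr (Nat.add_assoc r s u).symm).symm (Fin.castAdd u (Fin.castAdd s i))
          = Fin.castAdd (s + u) i := fun i => Fin.ext rfl
    have harg2 : ∀ i : Fin s,
        (finCongr (Nat.add_assoc r s u).symm).symm (Fin.castAdd u (Fin.natAdd r i))
          = Fin.natAdd r (Fin.castAdd u i) := fun i => Fin.ext rfl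
    have harg3 : ∀ i : Fin u,
        (finCongr (Nat.add_assoc r s u).symm).symm (Fin.natAdd (r + s) i)
          = Fin.natAdd r (Fin.natAdd s i) := fun i => Fin.ext (by
        simp only [finCongr_symm, finCongr_apply, Fin.coe_cast, Fin.coe_natAdd]
        omega)
    have hinv : invprod c ρ (fun i => t (finCongr (Nat.add_assoc r s u).symm i))
        = invprod c (((finCongr (Nat.add_assoc r s u).symm).symm.trans ρ).trans
            (finCongr (Nat.add_assoc r s u).symm)) t := by
      unfold invprod
      refine Finset.prod_nbij'
        (fun q => (finCongr (Nat.add_assoc r s u).symm q.1,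
          finCongr (Nat.add_assoc r s u).symm q.2))
        (fun p => ((finCongr (Nat.add_assoc r s u).symm).symm p.1,
          (finCongr (Nat.add_assoc r s u).symm).symm p.2)) ?_ ?_ ?_ ?_ ?_
      · rintro q hq
        simp only [Finset.mem_filter, Finset.mem_univ, true_and, Equiv.trans_apply,
          Equiv.symm_apply_apply, Fin.lt_def, finCongr_apply, Fin.coe_cast] at hq ⊢
        exact hq
      · rintro p hp
        simp only [Finset.mem_filter, Finset.mem_univ, true_and, Equiv.trans_apply,
          Fin.lt_def, finCongr_symm, finCongr_apply, Fin.coe_cast] at hp ⊢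
        exact hp
      · rintro q -
        exact Prod.ext (Equiv.symm_apply_apply _ _) (Equiv.symm_apply_apply _ _)
      · rintro p -
        exact Prod.ext (Equiv.apply_symm_apply _ _) (Equiv.apply_symm_apply _ _)
      · rintro q -
        simp only [Equiv.trans_apply, Equiv.symm_apply_apply]
    have h1 : (fun i : Fin r =>
          t (finCongr (Nat.add_assoc r s u).symm (ρ (Fin.castAdd (s + u) i))))
        = fun i => t ((((finCongr (Nat.add_assoc r s u).symm).symm.trans ρ).trans
            (finCongr (Nat.add_assoc r s u).symm)) (Fin.castAdd u (Fin.castAdd s i))) := by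
      funext i
      rw [Equiv.trans_apply, Equiv.trans_apply, harg1 i]
    have h2 : (fun i : Fin s =>
          t (finCongr (Nat.add_assoc r s u).symm (ρ (Fin.natAdd r (Fin.castAdd u i)))))
        = fun i => t ((((finCongr (Nat.add_assoc r s u).symm).symm.trans ρ).trans
            (finCongr (Nat.add_assoc r s u).symm)) (Fin.castAdd u (Fin.natAdd r i))) := by
      funext i
      rw [Equiv.trans_apply, Equiv.trans_apply, harg2 i]
    have h3 : (fun i : Fin u =>
          t (finCongr (Nat.add_assoc r s u).symm (ρ (Fin.natAdd r (Fin.natAdd s i)))))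
        = fun i => t ((((finCongr (Nat.add_assoc r s u).symm).symm.trans ρ).trans
            (finCongr (Nat.add_assoc r s u).symm)) (Fin.natAdd (r + s) i)) := by
      funext i
      rw [Equiv.trans_apply, Equiv.trans_apply, harg3 i]
    rw [hinv, h1, h2, h3]

end


/-- the shuffle product with an arbitrary kernel `c : X × X → k` is
associative, so `⊕_{n≥0} Map(X^n, k)` is an associative `k`-algebra under `*_c`. -/
theorem shuffleMul_assoc {k X : Type*} [CommRing k] (c : X → X → k)
    {r s u : ℕ} (φ : (Fin r → X) → k) (ψ : (Fin s → X) → k) (χ : (Fin u → X) → k)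
    (t : Fin (r + s + u) → X) :
    shuffleMul c (shuffleMul c φ ψ) χ t =
      shuffleMul c φ (shuffleMul c ψ χ)
        (fun i => t (finCongr (Nat.add_assoc r s u).symm i)) := by
  rw [left_expand, right_expand]
  exact (transport c φ ψ χ t).symm
end

section
/- Let k be a field, n ≥ 1 and r₁,…,r_n ≥ 1, and let A be the polynomial ring over k in the variables a^{(α)}_i for 1 ≤ α ≤ n and 1 ≤ i ≤ r_α. For 1 ≤ m ≤ r₁ + ⋯ + r_n, let c_m ∈ A be the coefficient of T^m in the product of polynomials ∏_{α=1}^n (1 + a^{(α)}_1 T + a^{(α)}_2 T² + ⋯ + a^{(α)}_{r_α} T^{r_α}) ∈ A[T]. Then A is integral over the k-subalgebra of A generated by c₁,…,c_{r₁+⋯+r_n}. (This is the local model of the proposition that the Witt addition morphism wadd : ∏_i W^{r_i} → W^{r}, given by multiplication of power series with constant term 1, is an integral morphism of schemes.) -/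
set_option synthInstance.maxHeartbeats 1000000
set_option maxHeartbeats 1000000

open Polynomial

lemma aux_reverse_prod {R ι : Type*} [CommRing R] [NoZeroDivisors R]
    (s : Finset ι) (f : ι → R[X]) :
    (∏ i ∈ s, f i).reverse = ∏ i ∈ s, (f i).reverse := by
  induction s using Finset.cons_induction with
  | empty => simpa using reverse_C (1 : R)
  | cons a s ha ih =>
      rw [Finset.prod_cons, Finset.prod_cons, Polynomial.reverse_mul_of_domain, ih]

lemma aux_monic_reverse {R : Type*} [CommRing R] [Nontrivial R] {p : R[X]}
    (h : p.coeff 0 = 1) : p.reverse.Monic := by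
  have h0 : p.natTrailingDegree = 0 := by
    rw [Polynomial.natTrailingDegree_eq_zero]; right; simp [h]
  unfold Polynomial.Monic
  rw [reverse_leadingCoeff, Polynomial.trailingCoeff, h0, h]

lemma aux_coeff_zero {R : Type*} [CommRing R] (m : ℕ) (x : Fin m → R) :
    (1 + ∑ i : Fin m, C (x i) * X ^ ((i : ℕ) + 1)).coeff 0 = 1 := by
  simp [coeff_one, finset_sum_coeff, coeff_C_mul, coeff_X_pow]

lemma aux_coeff {R : Type*} [CommRing R] {m : ℕ} (x : Fin m → R) {j : ℕ}
    (hj1 : 1 ≤ j) (hjm : j ≤ m) :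
    (1 + ∑ i : Fin m, C (x i) * X ^ ((i : ℕ) + 1)).coeff j = x ⟨j - 1, by omega⟩ := by
  rw [coeff_add, coeff_one, if_neg (by omega), finset_sum_coeff]
  rw [Finset.sum_eq_single (⟨j - 1, by omega⟩ : Fin m)]
  · have : j - 1 + 1 = j := by omega
    simp [coeff_C_mul, coeff_X_pow, this]
  · intro i _ hi
    rw [coeff_C_mul, coeff_X_pow, if_neg, mul_zero]
    intro hji
    apply hi; apply Fin.ext; simp; omega
  · intro hmem; exact absurd (Finset.mem_univ _) hmem

lemma aux_natDegree_le {R : Type*} [CommRing R] [Nontrivial R] (m : ℕ) (x : Fin m → R) :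
    (1 + ∑ i : Fin m, C (x i) * X ^ ((i : ℕ) + 1)).natDegree ≤ m := by
  refine (natDegree_add_le _ _).trans ?_
  rw [natDegree_one]
  refine max_le (by omega) ?_
  refine Polynomial.natDegree_sum_le_of_forall_le _ _ fun i _ => ?_
  refine (natDegree_C_mul_le _ _).trans ?_
  rw [natDegree_X_pow]; omega

/-- let `A` be the polynomial ring in variables `a^{(α)}_i`
(`1 ≤ α ≤ n`, `1 ≤ i ≤ r_α`) and let `c_m` be the coefficient of `T^m` in
`∏_α (1 + a^{(α)}_1 T + ⋯ + a^{(α)}_{r_α} T^{r_α})`.  Then `A` is integral over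
the `k`-subalgebra generated by `c₁, …, c_{r₁+⋯+rₙ}`.  (Local model of the
integrality of the Witt addition morphism.) -/
theorem polynomial_ring_integral_over_product_coefficients
    (k : Type*) [Field k] (n : ℕ) (hn : 1 ≤ n) (r : Fin n → ℕ)
    (hr : ∀ α, 1 ≤ r α) (a : MvPolynomial (Σ α : Fin n, Fin (r α)) k) :
    IsIntegral
      (Algebra.adjoin k
        ((fun m : ℕ =>
            (∏ α : Fin n,
              (1 + ∑ i : Fin (r α),
                Polynomial.C (MvPolynomial.X (⟨α, i⟩ : Σ α : Fin n, Fin (r α))) *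
                  Polynomial.X ^ ((i : ℕ) + 1)) :
              Polynomial (MvPolynomial (Σ α : Fin n, Fin (r α)) k)).coeff m) ''
          (Set.Icc 1 (∑ α : Fin n, r α))))
      a := by
  classical
  let A := MvPolynomial (Σ α : Fin n, Fin (r α)) k
  set P : Fin n → Polynomial A := fun α =>
    1 + ∑ i : Fin (r α),
      Polynomial.C (MvPolynomial.X (⟨α, i⟩ : Σ α : Fin n, Fin (r α))) *
        Polynomial.X ^ ((i : ℕ) + 1) with hPdef
  set Pr : Polynomial A := ∏ α, P α with hPrdef
  set Rtot : ℕ := ∑ α, r α with hRdef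
  set B : Subalgebra k A :=
    Algebra.adjoin k ((fun m : ℕ => Pr.coeff m) '' Set.Icc 1 Rtot) with hBdef
  show IsIntegral B a
  have hP0 : ∀ α, (P α).coeff 0 = 1 := fun α => aux_coeff_zero _ _
  have hPc : ∀ (α : Fin n) (j : ℕ) (hj1 : 1 ≤ j) (hjm : j ≤ r α),
      (P α).coeff j = MvPolynomial.X ⟨α, ⟨j - 1, by omega⟩⟩ := by
    intro α j hj1 hjm
    exact aux_coeff _ hj1 hjm
  have hPdeg : ∀ α, (P α).natDegree = r α := by
    intro α
    refine le_antisymm (aux_natDegree_le _ _) (le_natDegree_of_ne_zero ?_)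
    rw [hPc α (r α) (hr α) le_rfl]
    exact MvPolynomial.X_ne_zero _
  have hPne : ∀ α, P α ≠ 0 := by
    intro α h
    have := hP0 α
    rw [h] at this
    simp at this
  have hPrdeg : Pr.natDegree = Rtot := by
    rw [hPrdef, natDegree_prod _ _ fun α _ => hPne α]
    exact Finset.sum_congr rfl fun α _ => hPdeg α
  have hPr0 : Pr.coeff 0 = 1 := by
    have : Pr.coeff 0 = Polynomial.constantCoeff Pr := rfl
    rw [this, hPrdef, map_prod]
    refine Finset.prod_eq_one fun α _ => ?_
    exact hP0 α
  set Q : Polynomial A := Pr.reverse with hQdef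
  have hQ : Q = ∏ α, (P α).reverse := aux_reverse_prod _ _
  have hQmonic : Q.Monic := by
    rw [hQ]
    exact monic_prod_of_monic _ _ fun α _ => aux_monic_reverse (hP0 α)
  have hPrtr : Pr.natTrailingDegree = 0 := by
    rw [Polynomial.natTrailingDegree_eq_zero]; right; simp [hPr0]
  have hQdeg : Q.natDegree = Rtot := by
    rw [hQdef, reverse_natDegree, hPrtr, hPrdeg, Nat.sub_zero]
  have hQcoeffB : ∀ j, Q.coeff j ∈ B := by
    intro j
    rcases lt_trichotomy j Rtot with hj | hj | hj
    · have : Q.coeff j = Pr.coeff (Rtot - j) := by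
        rw [hQdef, coeff_reverse, hPrdeg, revAt_le (le_of_lt hj)]
      rw [this, hBdef]
      exact Algebra.subset_adjoin ⟨Rtot - j, ⟨by omega, by omega⟩, rfl⟩
    · have : Q.coeff j = Pr.coeff 0 := by
        rw [hQdef, coeff_reverse, hPrdeg, hj, revAt_le le_rfl, Nat.sub_self]
      rw [this, hPr0]
      exact one_mem B
    · have : Q.coeff j = 0 := coeff_eq_zero_of_natDegree_lt (by omega)
      rw [this]
      exact zero_mem B
  have hlift : Q ∈ Polynomial.lifts (algebraMap B A) := by
    rw [lifts_iff_coeff_lifts]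
    intro m
    exact ⟨⟨Q.coeff m, hQcoeffB m⟩, rfl⟩
  obtain ⟨f, hfmap, hfdeg, hfmonic⟩ := lifts_and_degree_eq_and_monic hlift hQmonic
  have key : ∀ α : Fin n,
      (P α).reverse.map (algebraMap A (FractionRing A)) ∈
        Polynomial.lifts (algebraMap (integralClosure B (FractionRing A)) (FractionRing A)) := by
    intro α
    refine integralClosure.mem_lifts_of_monic_of_dvd_map (FractionRing A) hfmonic
      ((aux_monic_reverse (hP0 α)).map _) ?_
    have hcomp : f.map (algebraMap B (FractionRing A)) =
        (f.map (algebraMap B A)).map (algebraMap A (FractionRing A)) := by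
      rw [Polynomial.map_map, ← IsScalarTower.algebraMap_eq]
    rw [hcomp, hfmap, hQ, Polynomial.map_prod]
    exact Finset.dvd_prod_of_mem _ (Finset.mem_univ α)
  have hint : ∀ (α : Fin n) (m : ℕ), IsIntegral B ((P α).reverse.coeff m) := by
    intro α m
    have h1 := (lifts_iff_coeff_lifts _).1 (key α) m
    obtain ⟨⟨y, hy⟩, hyy⟩ := h1
    rw [Polynomial.coeff_map] at hyy
    rw [← isIntegral_algHom_iff (IsScalarTower.toAlgHom B A (FractionRing A))
      (IsFractionRing.injective A (FractionRing A))]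
    have heq : (algebraMap A (FractionRing A)) ((P α).reverse.coeff m) = y := hyy.symm
    show IsIntegral B ((algebraMap A (FractionRing A)) ((P α).reverse.coeff m))
    rw [heq]
    exact hy
  have hX : ∀ s : Σ α : Fin n, Fin (r α), IsIntegral B (MvPolynomial.X s : A) := by
    rintro ⟨α, i⟩
    have hi : (i : ℕ) < r α := i.isLt
    have := hint α (r α - ((i : ℕ) + 1))
    rw [coeff_reverse, hPdeg α, revAt_le (by omega)] at this
    have h2 : r α - (r α - ((i : ℕ) + 1)) = (i : ℕ) + 1 := by omega
    rw [h2, hPc α ((i : ℕ) + 1) (by omega) (by omega)] at this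
    convert this using 2
    exact Sigma.ext rfl (heq_of_eq (Fin.ext (by simp)))
  have hle : Algebra.adjoin k (Set.range (MvPolynomial.X : _ → A)) ≤
      Subalgebra.restrictScalars k (integralClosure B A) := by
    refine Algebra.adjoin_le ?_
    rintro _ ⟨s, rfl⟩
    exact hX s
  have ha : a ∈ Subalgebra.restrictScalars k (integralClosure B A) := by
    apply hle
    rw [MvPolynomial.adjoin_range_X]
    trivial
  exact ha
end

section
/- Let k be a field of characteristic zero, let φ : M → N be a functor of orbifolds, let f ∈ F₀(M) and let g ∈ F(N). Then the orbifold direct image φ_* and the inverse image φ^* are adjoint with respect to the orbifold scalar product: (φ_* f, g) = (f, φ^* g), i.e. Σ_{[y]} (φ_* f)(y) · g(y) / |Aut_N(y)| = Σ_{[x]} f(x) · g(φ(x)) / |Aut_M(x)|, where the sums are over isomorphism classes of objects of N and of M respectively (both sums have finitely many nonzero terms). -/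
open CategoryTheory

open scoped Classical in
/-- for a functor `φ : M → N` of orbifolds (groupoids with finite
automorphism groups), the orbifold direct image `φ_*` and the inverse image `φ^*`
are adjoint for the orbifold scalar product:
`(φ_* f, g) = (f, φ^* g)` for `f ∈ F₀(M)`, `g ∈ F(N)`.  Sums run over isomorphism
classes of objects, realized as the quotient by the `isIsomorphicSetoid`. -/
theorem orbifold_pushforward_pullback_adjoint
    (k : Type*) [Field k] [CharZero k]
    {M N : Type*} [Groupoid M] [Groupoid N]
    [∀ x : M, Finite (Aut x)] [∀ y : N, Finite (Aut y)]
    (φ : M ⥤ N)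
    (f : M → k) (hf : ∀ x y : M, Nonempty (x ≅ y) → f x = f y)
    (hf0 : Set.Finite
      (Quotient.mk (CategoryTheory.isIsomorphicSetoid M) '' {x : M | f x ≠ 0}))
    (g : N → k) (hg : ∀ x y : N, Nonempty (x ≅ y) → g x = g y) :
    ∑ᶠ d : Quotient (CategoryTheory.isIsomorphicSetoid N),
      (∑ᶠ c : Quotient (CategoryTheory.isIsomorphicSetoid M),
          if Nonempty (φ.obj c.out ≅ d.out) then
            f c.out * (Nat.card (Aut d.out) : k) / (Nat.card (Aut c.out) : k)
          else 0) *
        g d.out / (Nat.card (Aut d.out) : k) =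
      ∑ᶠ c : Quotient (CategoryTheory.isIsomorphicSetoid M),
        f c.out * g (φ.obj c.out) / (Nat.card (Aut c.out) : k) := by
  classical
  have hAutN : ∀ y : N, (Nat.card (Aut y) : k) ≠ 0 := fun y => by
    have : Nat.card (Aut y) ≠ 0 := Nat.card_ne_zero.mpr ⟨⟨Iso.refl y⟩, inferInstance⟩
    exact_mod_cast this
  set T : Finset (Quotient (CategoryTheory.isIsomorphicSetoid M)) := hf0.toFinset with hTdef
  have hT : ∀ c, c ∉ T → f (Quotient.out c) = 0 := by
    intro c hc
    by_contra h
    exact hc (hf0.mem_toFinset.mpr ⟨c.out, h, c.out_eq⟩)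
  -- map sending a class of M to the class of its image
  set m : Quotient (CategoryTheory.isIsomorphicSetoid M) →
      Quotient (CategoryTheory.isIsomorphicSetoid N) :=
    fun c => Quotient.mk _ (φ.obj c.out) with hmdef
  have hiso : ∀ c d, Nonempty (φ.obj (Quotient.out c) ≅ Quotient.out d) ↔ m c = d := by
    intro c d
    constructor
    · intro h
      calc m c = Quotient.mk _ d.out := Quotient.sound h
        _ = d := d.out_eq
    · intro h
      subst h
      have h := @Quotient.mk_out _ (CategoryTheory.isIsomorphicSetoid N) (φ.obj c.out)
      exact ⟨h.some.symm⟩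
  -- the summand
  set F : Quotient (CategoryTheory.isIsomorphicSetoid M) →
      Quotient (CategoryTheory.isIsomorphicSetoid N) → k :=
    fun c d =>
      (if Nonempty (φ.obj c.out ≅ d.out) then
        f c.out * (Nat.card (Aut d.out) : k) / (Nat.card (Aut c.out) : k) else 0) *
        g d.out / (Nat.card (Aut d.out) : k) with hFdef
  have hinner : ∀ d : Quotient (CategoryTheory.isIsomorphicSetoid N),
      (∑ᶠ c : Quotient (CategoryTheory.isIsomorphicSetoid M), if Nonempty (φ.obj (Quotient.out c) ≅ Quotient.out d) then
          f c.out * (Nat.card (Aut d.out) : k) / (Nat.card (Aut c.out) : k) else 0)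
        = ∑ c ∈ T, (if Nonempty (φ.obj c.out ≅ d.out) then
          f c.out * (Nat.card (Aut d.out) : k) / (Nat.card (Aut c.out) : k) else 0) := by
    intro d
    apply finsum_eq_sum_of_support_subset
    intro c hc
    simp only [Function.mem_support] at hc
    by_contra hcT
    apply hc
    rw [hT c hcT]
    simp
  have hLHS : ∀ d : Quotient (CategoryTheory.isIsomorphicSetoid N),
      (∑ᶠ c : Quotient (CategoryTheory.isIsomorphicSetoid M), if Nonempty (φ.obj (Quotient.out c) ≅ Quotient.out d) then
          f c.out * (Nat.card (Aut d.out) : k) / (Nat.card (Aut c.out) : k) else 0)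
        * g d.out / (Nat.card (Aut d.out) : k) = ∑ c ∈ T, F c d := by
    intro d
    rw [hinner, Finset.sum_mul, Finset.sum_div]
  set D : Finset (Quotient (CategoryTheory.isIsomorphicSetoid N)) := T.image m with hDdef
  have hsupp : (Function.support fun d => ∑ c ∈ T, F c d) ⊆ ↑D := by
    intro d hd
    simp only [Function.mem_support] at hd
    obtain ⟨c, hcT, hc⟩ := Finset.exists_ne_zero_of_sum_ne_zero hd
    have : Nonempty (φ.obj (Quotient.out c) ≅ Quotient.out d) := by
      by_contra h
      simp [hFdef, h] at hc
    exact Finset.mem_coe.mpr (Finset.mem_image.mpr ⟨c, hcT, (hiso c d).mp this⟩)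
  calc
    (∑ᶠ d : Quotient (CategoryTheory.isIsomorphicSetoid N),
        (∑ᶠ c : Quotient (CategoryTheory.isIsomorphicSetoid M), if Nonempty (φ.obj (Quotient.out c) ≅ Quotient.out d) then
          f c.out * (Nat.card (Aut d.out) : k) / (Nat.card (Aut c.out) : k) else 0)
        * g d.out / (Nat.card (Aut d.out) : k))
      = ∑ᶠ d, ∑ c ∈ T, F c d := by
        apply finsum_congr; intro d; exact hLHS d
    _ = ∑ d ∈ D, ∑ c ∈ T, F c d := finsum_eq_sum_of_support_subset _ hsupp
    _ = ∑ c ∈ T, ∑ d ∈ D, F c d := Finset.sum_comm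
    _ = ∑ c ∈ T, f c.out * g (φ.obj c.out) / (Nat.card (Aut c.out) : k) := by
        apply Finset.sum_congr rfl
        intro c hcT
        rw [Finset.sum_eq_single (m c)]
        · have h1 : Nonempty (φ.obj c.out ≅ (m c).out) := (hiso c (m c)).mpr rfl
          have h2 : g ((m c).out) = g (φ.obj c.out) := hg _ _ ⟨h1.some.symm⟩
          simp only [hFdef, if_pos h1, h2]
          have hD := hAutN (m c).out
          have hC : (Nat.card (Aut c.out) : k) ≠ 0 := by
            have : Nat.card (Aut c.out) ≠ 0 :=
              Nat.card_ne_zero.mpr ⟨⟨Iso.refl _⟩, inferInstance⟩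
            exact_mod_cast this
          field_simp
        · intro d _ hd
          have : ¬ Nonempty (φ.obj c.out ≅ d.out) := fun h => hd ((hiso c d).mp h).symm
          simp [hFdef, this]
        · intro hmc
          exact absurd (Finset.mem_image.mpr ⟨c, hcT, rfl⟩) hmc
    _ = ∑ᶠ c : Quotient (CategoryTheory.isIsomorphicSetoid M), f c.out * g (φ.obj c.out) / (Nat.card (Aut c.out) : k) := by
        symm
        apply finsum_eq_sum_of_support_subset
        intro c hc
        simp only [Function.mem_support] at hc
        by_contra hcT
        apply hc
        rw [hT c hcT]
        simp
end

section
/- Let r, s ≥ 1 and consider the polynomial ring ℤ[X₁,…,X_r, Y₁,…,Y_s]. For every m ≥ 0, the coefficient of t^m in the polynomial ∏_{i=1}^r ∏_{j=1}^s (1 − X_i Y_j t) ∈ ℤ[X₁,…,X_r,Y₁,…,Y_s][t] lies in the subring of ℤ[X₁,…,X_r,Y₁,…,Y_s] generated by the elementary symmetric polynomials e₁(X),…,e_r(X) in the variables X₁,…,X_r together with the elementary symmetric polynomials e₁(Y),…,e_s(Y) in the variables Y₁,…,Y_s. (This is the assertion that the rule (∏_i(1−λ_i t)) ⊠ (∏_j(1−μ_j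 t)) = ∏_{i,j}(1−λ_iμ_j t) defines the Witt multiplication as a morphism of schemes W^{≤r} × W^{≤s} → W^{≤rs} on the coefficient spaces of polynomials with constant term 1.) -/
open MvPolynomial

set_option maxHeartbeats 1000000
set_option synthInstance.maxHeartbeats 400000

open MvPolynomial

lemma aux_symm_mem_adjoin_esymm {R : Type*} [CommRing R] {n : ℕ}
    {p : MvPolynomial (Fin n) R} (hp : p.IsSymmetric) :
    p ∈ Algebra.adjoin R (Set.range fun k : Fin n => esymm (Fin n) R ((k : ℕ) + 1)) := by
  obtain ⟨q, hq⟩ := esymmAlgHom_surjective (σ := Fin n) (n := n) R (by simp) ⟨p, hp⟩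
  rw [Algebra.adjoin_range_eq_range_aeval]
  exact ⟨q, by simpa [esymmAlgHom_apply] using congrArg Subtype.val hq⟩

/-- A symmetric polynomial over `A` whose coefficients all lie in a subalgebra `A₀ ⊆ A`
lies in the `ℤ`-subalgebra generated by `C '' A₀` and the elementary symmetric polynomials. -/
lemma aux_mem_adjoin_of_symm_coeffs {A : Type*} [CommRing A] (A₀ : Subalgebra ℤ A) {r : ℕ}
    {p : MvPolynomial (Fin r) A} (hp : p.IsSymmetric) (hc : ∀ d, p.coeff d ∈ A₀) :
    p ∈ Algebra.adjoin ℤ ((MvPolynomial.C '' (A₀ : Set A)) ∪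
      Set.range fun k : Fin r => esymm (Fin r) A ((k : ℕ) + 1)) := by
  classical
  set q : MvPolynomial (Fin r) A₀ :=
    ∑ d ∈ p.support, monomial d (⟨p.coeff d, hc d⟩ : A₀) with hqdef
  have hmap : map (A₀.val : A₀ →+* A) q = p := by
    rw [hqdef, map_sum]
    simp only [map_monomial, Subalgebra.coe_val]
    exact p.support_sum_monomial_coeff
  have hqs : q.IsSymmetric := by
    intro π
    apply MvPolynomial.map_injective (A₀.val : A₀ →+* A) Subtype.val_injective
    rw [map_rename, hmap, hp π]
  have hq : q ∈ Algebra.adjoin A₀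
      (Set.range fun k : Fin r => esymm (Fin r) A₀ ((k : ℕ) + 1)) :=
    aux_symm_mem_adjoin_esymm hqs
  rw [← hmap]
  refine Algebra.adjoin_induction ?_ ?_ ?_ ?_ hq
  · rintro x ⟨k, rfl⟩
    rw [map_esymm]
    exact Algebra.subset_adjoin (Or.inr ⟨k, rfl⟩)
  · intro a
    have : map (A₀.val : A₀ →+* A) (algebraMap A₀ (MvPolynomial (Fin r) A₀) a)
        = MvPolynomial.C (a : A) := by
      simp [algebraMap_eq]
    rw [this]
    exact Algebra.subset_adjoin (Or.inl ⟨(a : A), a.2, rfl⟩)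
  · intro x y _ _ hx hy
    rw [map_add]; exact add_mem hx hy
  · intro x y _ _ hx hy
    rw [map_mul]; exact mul_mem hx hy

/-- each coefficient of `t^m` in `∏_{i,j} (1 - X_i Y_j t)` lies in the
subring generated by the elementary symmetric polynomials in the `X`'s together with
those in the `Y`'s.  (The Witt multiplication is a morphism of schemes
`W^{≤r} × W^{≤s} → W^{≤rs}`.) -/
theorem witt_multiplication_coeff_mem_adjoin_esymm
    (r s : ℕ) (hr : 1 ≤ r) (hs : 1 ≤ s) (m : ℕ) :
    (∏ i : Fin r, ∏ j : Fin s,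
        (1 - Polynomial.C (MvPolynomial.X (Sum.inl i) * MvPolynomial.X (Sum.inr j)) *
          Polynomial.X) :
      Polynomial (MvPolynomial (Fin r ⊕ Fin s) ℤ)).coeff m ∈
    Algebra.adjoin ℤ
      ((Set.range fun k : Fin r =>
          MvPolynomial.rename Sum.inl (MvPolynomial.esymm (Fin r) ℤ ((k : ℕ) + 1))) ∪
        (Set.range fun k : Fin s =>
          MvPolynomial.rename Sum.inr (MvPolynomial.esymm (Fin s) ℤ ((k : ℕ) + 1)))) := by
  classical
  set e := sumAlgEquiv ℤ (Fin r) (Fin s) with he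
  set P : Polynomial (MvPolynomial (Fin r ⊕ Fin s) ℤ) :=
    ∏ i : Fin r, ∏ j : Fin s,
      (1 - Polynomial.C (X (Sum.inl i) * X (Sum.inr j)) * Polynomial.X) with hP
  set Q : Polynomial (MvPolynomial (Fin r) (MvPolynomial (Fin s) ℤ)) :=
    ∏ i : Fin r, ∏ j : Fin s,
      (1 - Polynomial.C (X i * MvPolynomial.C (X j)) * Polynomial.X) with hQ
  have hPQ : P.map (e : MvPolynomial (Fin r ⊕ Fin s) ℤ →+* MvPolynomial (Fin r) (MvPolynomial (Fin s) ℤ)) = Q := by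
    simp [hP, hQ, Polynomial.map_prod, Polynomial.map_sub, Polynomial.map_one, Polynomial.map_mul,
      Polynomial.map_C, Polynomial.map_X, map_mul, he, sumAlgEquiv_X_inl, sumAlgEquiv_X_inr, sumToIter_Xl, sumToIter_Xr]
  have hec : e (P.coeff m) = Q.coeff m := by
    rw [← hPQ, Polynomial.coeff_map]; rfl
  have hsym : (Q.coeff m).IsSymmetric := by
    intro pi
    have h1 : Q.map ((rename pi : MvPolynomial (Fin r) (MvPolynomial (Fin s) ℤ) →ₐ[(MvPolynomial (Fin s) ℤ)] MvPolynomial (Fin r) (MvPolynomial (Fin s) ℤ)) :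
        MvPolynomial (Fin r) (MvPolynomial (Fin s) ℤ) →+* MvPolynomial (Fin r) (MvPolynomial (Fin s) ℤ)) = Q := by
      have h2 : Q.map ((rename pi : MvPolynomial (Fin r) (MvPolynomial (Fin s) ℤ) →ₐ[(MvPolynomial (Fin s) ℤ)] MvPolynomial (Fin r) (MvPolynomial (Fin s) ℤ)) :
          MvPolynomial (Fin r) (MvPolynomial (Fin s) ℤ) →+* MvPolynomial (Fin r) (MvPolynomial (Fin s) ℤ)) =
          ∏ i : Fin r, ∏ j : Fin s,
            (1 - Polynomial.C (X (pi i) * MvPolynomial.C (X j)) * Polynomial.X) := by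
        simp [hQ, Polynomial.map_prod, Polynomial.map_sub, Polynomial.map_one, Polynomial.map_mul,
          Polynomial.map_C, Polynomial.map_X, map_mul, rename_X, rename_C]
      rw [h2, hQ]
      exact Equiv.prod_comp pi
        (fun i => ∏ j : Fin s, (1 - Polynomial.C (X i * MvPolynomial.C (X j)) * Polynomial.X))
    calc rename pi (Q.coeff m)
        = (Q.map ((rename pi : MvPolynomial (Fin r) (MvPolynomial (Fin s) ℤ) →ₐ[(MvPolynomial (Fin s) ℤ)] MvPolynomial (Fin r) (MvPolynomial (Fin s) ℤ)) :
            MvPolynomial (Fin r) (MvPolynomial (Fin s) ℤ) →+* MvPolynomial (Fin r) (MvPolynomial (Fin s) ℤ))).coeff m :=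
          (Polynomial.coeff_map _ _).symm
      _ = Q.coeff m := by rw [h1]
  set A₀ : Subalgebra ℤ (MvPolynomial (Fin s) ℤ) :=
    Algebra.adjoin ℤ (Set.range fun k : Fin s => esymm (Fin s) ℤ ((k : ℕ) + 1)) with hA₀
  have hcf : ∀ d, (Q.coeff m).coeff d ∈ A₀ := by
    intro d
    refine aux_symm_mem_adjoin_esymm ?_
    intro tau
    have F : MvPolynomial (Fin r) (MvPolynomial (Fin s) ℤ) →+* MvPolynomial (Fin r) (MvPolynomial (Fin s) ℤ) :=
      MvPolynomial.map ((rename tau : (MvPolynomial (Fin s) ℤ) →ₐ[ℤ] (MvPolynomial (Fin s) ℤ)) : (MvPolynomial (Fin s) ℤ) →+* (MvPolynomial (Fin s) ℤ))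
    have h2 : Q.map (MvPolynomial.map ((rename tau : (MvPolynomial (Fin s) ℤ) →ₐ[ℤ] (MvPolynomial (Fin s) ℤ)) : (MvPolynomial (Fin s) ℤ) →+* (MvPolynomial (Fin s) ℤ))) = Q := by
      have h3 : Q.map (MvPolynomial.map ((rename tau : (MvPolynomial (Fin s) ℤ) →ₐ[ℤ] (MvPolynomial (Fin s) ℤ)) : (MvPolynomial (Fin s) ℤ) →+* (MvPolynomial (Fin s) ℤ))) =
          ∏ i : Fin r, ∏ j : Fin s,
            (1 - Polynomial.C (X i * MvPolynomial.C (X (tau j))) * Polynomial.X) := by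
        simp [hQ, Polynomial.map_prod, Polynomial.map_sub, Polynomial.map_one, Polynomial.map_mul,
          Polynomial.map_C, Polynomial.map_X, map_mul, MvPolynomial.map_X, MvPolynomial.map_C,
          rename_X]
      rw [h3, hQ]
      exact Finset.prod_congr rfl fun i _ => Equiv.prod_comp tau
        (fun j => (1 - Polynomial.C (X i * MvPolynomial.C (X j)) * Polynomial.X))
    calc rename tau ((Q.coeff m).coeff d)
        = (MvPolynomial.map ((rename tau : (MvPolynomial (Fin s) ℤ) →ₐ[ℤ] (MvPolynomial (Fin s) ℤ)) : (MvPolynomial (Fin s) ℤ) →+* (MvPolynomial (Fin s) ℤ)) (Q.coeff m)).coeff d :=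
          (MvPolynomial.coeff_map _ _ _).symm
      _ = ((Q.map (MvPolynomial.map ((rename tau : (MvPolynomial (Fin s) ℤ) →ₐ[ℤ] (MvPolynomial (Fin s) ℤ)) : (MvPolynomial (Fin s) ℤ) →+* (MvPolynomial (Fin s) ℤ)))).coeff m).coeff d := by
          rw [Polynomial.coeff_map]
      _ = (Q.coeff m).coeff d := by rw [h2]
  have key : Q.coeff m ∈ Algebra.adjoin ℤ
      ((MvPolynomial.C '' (A₀ : Set (MvPolynomial (Fin s) ℤ))) ∪
        Set.range fun k : Fin r => esymm (Fin r) (MvPolynomial (Fin s) ℤ) ((k : ℕ) + 1)) :=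
    aux_mem_adjoin_of_symm_coeffs A₀ hsym hcf
  set G : Set (MvPolynomial (Fin r ⊕ Fin s) ℤ) :=
    (Set.range fun k : Fin r => rename Sum.inl (esymm (Fin r) ℤ ((k : ℕ) + 1))) ∪
      (Set.range fun k : Fin s => rename Sum.inr (esymm (Fin s) ℤ ((k : ℕ) + 1))) with hG
  have hsub : Algebra.adjoin ℤ
      ((MvPolynomial.C '' (A₀ : Set (MvPolynomial (Fin s) ℤ))) ∪
        Set.range fun k : Fin r => esymm (Fin r) (MvPolynomial (Fin s) ℤ) ((k : ℕ) + 1)) ≤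
      (Algebra.adjoin ℤ G).map e.toAlgHom := by
    rw [Algebra.adjoin_le_iff]
    rintro x (⟨a, ha, rfl⟩ | ⟨k, rfl⟩)
    · refine Algebra.adjoin_induction ?_ ?_ ?_ ?_ ha
      · rintro b ⟨k, rfl⟩
        refine ⟨rename Sum.inr (esymm (Fin s) ℤ ((k : ℕ) + 1)),
          Algebra.subset_adjoin (Or.inr ⟨k, rfl⟩), ?_⟩
        have h4 := AlgHom.congr_fun (sumAlgEquiv_comp_rename_inr ℤ (Fin r) (Fin s))
          (esymm (Fin s) ℤ ((k : ℕ) + 1))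
        simpa [he] using h4
      · intro z
        refine ⟨algebraMap ℤ _ z, Subalgebra.algebraMap_mem _ z, ?_⟩
        simp [MvPolynomial.algebraMap_eq]
      · intro x y _ _ hx hy
        rw [map_add]
        exact add_mem hx hy
      · intro x y _ _ hx hy
        rw [map_mul]
        exact mul_mem hx hy
    · refine ⟨rename Sum.inl (esymm (Fin r) ℤ ((k : ℕ) + 1)),
        Algebra.subset_adjoin (Or.inl ⟨k, rfl⟩), ?_⟩
      have h5 := AlgHom.congr_fun (sumAlgEquiv_comp_rename_inl ℤ (Fin r) (Fin s))
        (esymm (Fin r) ℤ ((k : ℕ) + 1))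
      have h6 : (mapAlgHom (R := ℤ) (σ := Fin r) (Algebra.ofId ℤ (MvPolynomial (Fin s) ℤ)))
          (esymm (Fin r) ℤ ((k : ℕ) + 1)) = esymm (Fin r) (MvPolynomial (Fin s) ℤ) ((k : ℕ) + 1) := by
        have := MvPolynomial.map_esymm (σ := Fin r) (R := ℤ) (S := MvPolynomial (Fin s) ℤ)
          ((k : ℕ) + 1) ((Algebra.ofId ℤ (MvPolynomial (Fin s) ℤ)) : ℤ →+* MvPolynomial (Fin s) ℤ)
        rw [mapAlgHom, AlgHom.coe_mk]
        exact this
      rw [h6] at h5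
      simpa [he] using h5
  obtain ⟨y, hy, hye⟩ := hsub key
  have hyP : y = P.coeff m := by
    apply e.injective
    rw [hec]
    exact hye
  rwa [← hyP]
end
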